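/- arXiv:2411.01605 — 8 statements merged into one kernel-verified Lean document; each statement's English description precedes it below -/
import Mathlib

section
/- Generalized Bohr inequality: Let R > 0 and let f be a bounded holomorphic function on the open disk D_R = {z ∈ ℂ : |z| < R}, with power series expansion f(z) = ∑_{n=0}^∞ a_n z^n at the origin. Then for every z ∈ ℂ with |z| ≤ R/3, the majorant series satisfies ∑_{n=0}^∞ |a_n| |z|^n ≤ sup_{w ∈ D_R} |f(w)|. -/
open Metric Complex FormalMultilinearSeries Real NNReal ENNReal

lemma lem_coeff (a : ℕ → ℂ) (n : ℕ) : (ofScalars ℂ a).coeff n = a n := by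
  simp [FormalMultilinearSeries.ofScalars, FormalMultilinearSeries.coeff, List.ofFn_const,
    Pi.one_def]

lemma lem_hasFPS {R : ℝ} (hR : 0 < R) {f : ℂ → ℂ} {a : ℕ → ℂ}
    (ha : ∀ z ∈ ball (0:ℂ) R, HasSum (fun n => a n * z ^ n) (f z)) :
    HasFPowerSeriesOnBall f (ofScalars ℂ a) 0 (ENNReal.ofReal R) := by
  constructor
  · refine ENNReal.le_of_forall_nnreal_lt fun ρ hρ => ?_
    have hρR : (ρ : ℝ) < R := by
      rwa [← ENNReal.ofReal_coe_nnreal, ENNReal.ofReal_lt_ofReal_iff hR] at hρ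
    have hz : ((ρ : ℝ) : ℂ) ∈ ball (0:ℂ) R := by
      simp only [mem_ball_zero_iff, Complex.norm_real, Real.norm_eq_abs]
      rwa [_root_.abs_of_nonneg ρ.coe_nonneg]
    have hsum := (ha _ hz).summable
    have h0 := hsum.tendsto_atTop_zero
    obtain ⟨C, hC⟩ := h0.norm.bddAbove_range
    refine le_radius_of_bound _ C fun n => ?_
    have h1 := hC ⟨n, rfl⟩
    simp only [norm_mul, norm_pow, Complex.norm_real, Real.norm_eq_abs,
      _root_.abs_of_nonneg ρ.coe_nonneg] at h1
    calc ‖ofScalars ℂ a n‖ * (ρ:ℝ) ^ n = ‖a n‖ * (ρ:ℝ) ^ n := by rw [ofScalars_norm]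
    _ ≤ C := h1
  · exact ENNReal.ofReal_pos.2 hR
  · intro y hy
    have hy' : y ∈ ball (0:ℂ) R := by
      rw [EMetric.mem_ball, edist_zero_right, ← ofReal_norm,
        ENNReal.ofReal_lt_ofReal_iff hR] at hy
      simpa [mem_ball_zero_iff] using hy
    have := ha y hy'
    simp only [zero_add]
    convert this using 3 with n
    · rfl
    rw [ofScalars_apply_eq, smul_eq_mul]

lemma lem_cauchy {R M : ℝ} (hR : 0 < R) {f : ℂ → ℂ} {a : ℕ → ℂ}
    (hf : DifferentiableOn ℂ f (ball (0:ℂ) R))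
    (hM : ∀ w ∈ ball (0:ℂ) R, ‖f w‖ ≤ M)
    (ha : ∀ z ∈ ball (0:ℂ) R, HasSum (fun n => a n * z ^ n) (f z)) (n : ℕ) :
    ‖a n‖ * R ^ n ≤ M := by
  have hat : HasFPowerSeriesAt f (ofScalars ℂ a) 0 :=
    (lem_hasFPS hR ha).hasFPowerSeriesAt
  -- for each 0 < r < R
  have key : ∀ r : ℝ, 0 < r → r < R → ‖a n‖ * r ^ n ≤ M := by
    intro r hr hrR
    set r' : NNReal := ⟨r, hr.le⟩ with hr'
    have hsub : closedBall (0:ℂ) r ⊆ ball (0:ℂ) R := closedBall_subset_ball hrR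
    have hd : DifferentiableOn ℂ f (closedBall (0:ℂ) (r' : ℝ)) := hf.mono hsub
    have hr'0 : 0 < r' := hr
    have hcb := hd.hasFPowerSeriesOnBall hr'0
    have heq : ofScalars ℂ a = cauchyPowerSeries f 0 r :=
      hat.eq_formalMultilinearSeries hcb.hasFPowerSeriesAt
    have hbound := norm_cauchyPowerSeries_le f 0 r n
    have hInt : ∀ θ ∈ Set.Icc (0:ℝ) (2*π), ‖f (circleMap 0 r θ)‖ ≤ M := by
      intro θ _
      exact hM _ (hsub (circleMap_mem_closedBall 0 hr.le θ))
    have hcont : ContinuousOn (fun θ : ℝ => ‖f (circleMap 0 r θ)‖) (Set.Icc 0 (2*π)) := by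
      apply ContinuousOn.norm
      apply hf.continuousOn.comp (continuous_circleMap 0 r).continuousOn
      intro θ _
      exact hsub (circleMap_mem_closedBall 0 hr.le θ)
    have hii : IntervalIntegrable (fun θ : ℝ => ‖f (circleMap 0 r θ)‖)
        MeasureTheory.volume 0 (2*π) := by
      apply ContinuousOn.intervalIntegrable
      rwa [Set.uIcc_of_le Real.two_pi_pos.le]
    have hIle : (∫ θ : ℝ in (0)..2 * π, ‖f (circleMap 0 r θ)‖) ≤ 2 * π * M := by
      have := intervalIntegral.integral_mono_on (a := 0) (b := 2*π) Real.two_pi_pos.le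
        hii (intervalIntegrable_const (c := M)) hInt
      simpa using this
    have hM0 : 0 ≤ M := le_trans (norm_nonneg _) (hM 0 (by simp [hR]))
    have : ‖ofScalars ℂ a n‖ ≤ M * |r|⁻¹ ^ n := by
      rw [heq]
      refine hbound.trans ?_
      gcongr
      rw [inv_mul_le_iff₀ Real.two_pi_pos]
      linarith [hIle]
    rw [ofScalars_norm] at this
    rw [_root_.abs_of_nonneg hr.le] at this
    calc ‖a n‖ * r ^ n ≤ (M * r⁻¹ ^ n) * r ^ n := by gcongr
    _ = M := by rw [inv_pow, mul_assoc, inv_mul_cancel₀ (pow_ne_zero _ hr.ne'), mul_one]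
  -- take limit r → R
  have hcont : ContinuousWithinAt (fun r : ℝ => ‖a n‖ * r ^ n) (Set.Iio R) R := by
    exact (continuous_const.mul (continuous_pow n)).continuousWithinAt
  have hlim : Filter.Tendsto (fun r : ℝ => ‖a n‖ * r ^ n) (nhdsWithin R (Set.Iio R))
      (nhds (‖a n‖ * R ^ n)) := hcont
  refine le_of_tendsto hlim ?_
  filter_upwards [Ioo_mem_nhdsLT_of_mem ⟨show R/2 < R by linarith, le_refl R⟩] with r hr
  exact key r (by linarith [hr.1, hR]) hr.2

local notation "conj'" => (starRingEnd ℂ)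

lemma lem_normSq_moebius (u v : ℂ) :
    normSq (1 - conj' u * v) - normSq (v - u) = (1 - normSq u) * (1 - normSq v) := by
  simp only [normSq_apply, mul_re, mul_im, sub_re, sub_im, one_re, one_im, conj_re, conj_im]
  ring

lemma lem_moebius_denom {u v : ℂ} (hu : ‖u‖ < 1) (hv : ‖v‖ ≤ 1) : 1 - conj' u * v ≠ 0 := by
  intro h
  have : ‖conj' u * v‖ < 1 := by
    rw [norm_mul, RCLike.norm_conj]
    calc ‖u‖ * ‖v‖ ≤ ‖u‖ * 1 := by gcongr
    _ < 1 := by simpa using hu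
  rw [sub_eq_zero] at h
  rw [← h] at this
  simp at this

lemma lem_moebius_lt {u v : ℂ} (hu : ‖u‖ < 1) (hv : ‖v‖ < 1) :
    ‖(v - u) / (1 - conj' u * v)‖ < 1 := by
  have hden := lem_moebius_denom hu hv.le
  rw [norm_div, div_lt_one (norm_pos_iff.2 hden)]
  have h2 : normSq (v - u) < normSq (1 - conj' u * v) := by
    have hkey := lem_normSq_moebius u v
    have hu' : ‖u‖ < 1 := hu
    have hv' : ‖v‖ < 1 := hv
    have h1 : 0 < (1 - normSq u) * (1 - normSq v) := by
      apply _root_.mul_pos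
      · rw [sub_pos, ← Complex.sq_norm]
        nlinarith [norm_nonneg u]
      · rw [sub_pos, ← Complex.sq_norm]
        nlinarith [norm_nonneg v]
    linarith
  have := (Real.sqrt_lt_sqrt (normSq_nonneg _) h2)
  simpa [Complex.norm_def] using this

lemma lem_schwarz_pick {G : ℂ → ℂ} (hd : DifferentiableOn ℂ G (ball 0 1))
    (hb : ∀ w ∈ ball 0 1, ‖G w‖ ≤ 1) : ‖deriv G 0‖ ≤ 1 - ‖G 0‖ ^ 2 := by
  have hG0 : ‖G 0‖ ≤ 1 := hb 0 (by simp)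
  have key : ∀ ε : ℝ, 0 < ε → ‖deriv G 0‖ ≤ (1 + ε) - ‖G 0‖ ^ 2 / (1 + ε) := by
    intro ε hε
    set s : ℂ := ((1 + ε : ℝ) : ℂ) with hs
    have hs0 : s ≠ 0 := by
      simp only [hs, ne_eq, Complex.ofReal_eq_zero]; intro h; linarith
    have hsnorm : ‖s‖ = 1 + ε := by
      rw [hs, Complex.norm_real, Real.norm_eq_abs, abs_of_pos (by linarith)]
    set H : ℂ → ℂ := fun w => G w / s with hHdef
    have hHball : ∀ w ∈ ball (0:ℂ) 1, ‖H w‖ < 1 := by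
      intro w hw
      rw [hHdef]
      simp only [norm_div, hsnorm]
      rw [div_lt_one (by linarith)]
      calc ‖G w‖ ≤ 1 := hb w hw
      _ < 1 + ε := by linarith
    have hHd : DifferentiableOn ℂ H (ball 0 1) := hd.div_const s
    set κ : ℂ := H 0 with hκdef
    have hκ : ‖κ‖ < 1 := hHball 0 (by simp)
    set ψ : ℂ → ℂ := fun w => (H w - κ) / (1 - conj' κ * H w) with hψdef
    have hden : ∀ w ∈ ball (0:ℂ) 1, (1:ℂ) - conj' κ * H w ≠ 0 :=
      fun w hw => lem_moebius_denom hκ (hHball w hw).le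
    have hψd : DifferentiableOn ℂ ψ (ball 0 1) := by
      apply DifferentiableOn.div
      · exact hHd.sub_const κ
      · exact (differentiableOn_const 1).sub (hHd.const_mul (conj' κ))
      · exact hden
    have hψ0 : ψ 0 = 0 := by
      rw [hψdef]; simp [← hκdef]
    have hmaps : Set.MapsTo ψ (ball (0:ℂ) 1) (ball (ψ 0) 1) := by
      intro w hw
      rw [hψ0, mem_ball_zero_iff]
      exact lem_moebius_lt hκ (hHball w hw)
    have hschwarz : ‖deriv ψ 0‖ ≤ 1 / 1 :=
      Complex.norm_deriv_le_div_of_mapsTo_ball hψd (hmaps.mono_right ball_subset_closedBall) one_pos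
    -- compute deriv ψ 0
    have hGd : DifferentiableAt ℂ G 0 := hd.differentiableAt (ball_mem_nhds 0 one_pos)
    have hH0 : HasDerivAt H (deriv G 0 / s) 0 := hGd.hasDerivAt.div_const s
    have hnum : HasDerivAt (fun w : ℂ => H w - κ) (deriv G 0 / s) 0 := hH0.sub_const κ
    have hden' : HasDerivAt (fun w : ℂ => (1:ℂ) - conj' κ * H w)
        (-(conj' κ * (deriv G 0 / s))) 0 := by
      simpa using (hH0.const_mul (conj' κ)).const_sub 1
    have hd0 : (1:ℂ) - conj' κ * H 0 ≠ 0 := hden 0 (by simp)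
    have hψder : HasDerivAt ψ
        (((deriv G 0 / s) * (1 - conj' κ * κ) - (κ - κ) * (-(conj' κ * (deriv G 0 / s)))) /
          (1 - conj' κ * κ) ^ 2) 0 := hnum.div hden' hd0
    have hval : ((deriv G 0 / s) * (1 - conj' κ * κ) - (κ - κ) * (-(conj' κ * (deriv G 0 / s)))) /
          (1 - conj' κ * κ) ^ 2 = deriv G 0 / (s * (1 - conj' κ * κ)) := by
      have hd0' : (1:ℂ) - conj' κ * κ ≠ 0 := hd0
      field_simp
      ring
    have hderiv : deriv ψ 0 = deriv G 0 / (s * (1 - conj' κ * κ)) := by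
      rw [hψder.deriv, hval]
    rw [hderiv] at hschwarz
    have hconj : conj' κ * κ = ((normSq κ : ℝ) : ℂ) := by
      rw [mul_comm, Complex.mul_conj]
    have hnormD : ‖(1:ℂ) - conj' κ * κ‖ = 1 - normSq κ := by
      rw [hconj, ← Complex.ofReal_one, ← Complex.ofReal_sub, Complex.norm_real,
        Real.norm_eq_abs, abs_of_pos]
      have hκ' : ‖κ‖ < 1 := hκ
      rw [sub_pos, ← Complex.sq_norm]
      nlinarith [norm_nonneg κ]
    have hnsκ : normSq κ = ‖G 0‖ ^ 2 / (1 + ε) ^ 2 := by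
      rw [← Complex.sq_norm]
      have : ‖κ‖ = ‖G 0‖ / (1 + ε) := by
        rw [hκdef, hHdef]
        simp only [norm_div, hs, Complex.norm_real, Real.norm_eq_abs,
          abs_of_pos (show (0:ℝ) < 1 + ε by linarith)]
      rw [this, div_pow]
    rw [div_one, norm_div, norm_mul, hsnorm, hnormD, hnsκ] at hschwarz
    have hpos : 0 < (1 + ε) * (1 - ‖G 0‖ ^ 2 / (1 + ε) ^ 2) := by
      have h1 : ‖G 0‖ ^ 2 / (1 + ε) ^ 2 < 1 := by
        rw [div_lt_one (by positivity)]
        nlinarith [norm_nonneg (G 0)]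
      nlinarith
    rw [div_le_one hpos] at hschwarz
    calc ‖deriv G 0‖ ≤ (1 + ε) * (1 - ‖G 0‖ ^ 2 / (1 + ε) ^ 2) := hschwarz
    _ = (1 + ε) - ‖G 0‖ ^ 2 / (1 + ε) := by field_simp
  -- take the limit ε → 0⁺
  have hcont : Filter.Tendsto (fun ε : ℝ => (1 + ε) - ‖G 0‖ ^ 2 / (1 + ε))
      (nhdsWithin 0 (Set.Ioi 0)) (nhds (1 - ‖G 0‖ ^ 2)) := by
    have hc : ContinuousAt (fun ε : ℝ => (1 + ε) - ‖G 0‖ ^ 2 / (1 + ε)) 0 := by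
      apply ContinuousAt.sub
      · fun_prop
      · exact (continuousAt_const.div (by fun_prop) (by norm_num))
    have h2 := hc.tendsto.mono_left (nhdsWithin_le_nhds (s := Set.Ioi (0:ℝ)))
    simpa using h2
  refine ge_of_tendsto hcont ?_
  filter_upwards [self_mem_nhdsWithin] with ε hε
  exact key ε hε

lemma lem_unit {g : ℂ → ℂ} {b : ℕ → ℂ}
    (hg : DifferentiableOn ℂ g (ball (0:ℂ) 1))
    (hb : ∀ ζ ∈ ball (0:ℂ) 1, HasSum (fun m => b m * ζ ^ m) (g ζ))
    (hle : ∀ ζ ∈ ball (0:ℂ) 1, ‖g ζ‖ ≤ 1)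
    {n : ℕ} (hn : 1 ≤ n) : ‖b n‖ ≤ 1 - ‖b 0‖ ^ 2 := by
  have hn0 : n ≠ 0 := by omega
  have hnC : (n : ℂ) ≠ 0 := Nat.cast_ne_zero.2 hn0
  have hb1 : ∀ m, ‖b m‖ ≤ 1 := by
    intro m
    have := lem_cauchy one_pos hg hle hb m
    simpa using this
  set d : ℕ → ℂ := fun k => b (n * k) with hd_def
  set p : FormalMultilinearSeries ℂ ℂ ℂ := ofScalars ℂ d with hp_def
  have hrad : (1 : ℝ≥0∞) ≤ p.radius := by
    have := p.le_radius_of_bound 1 (r := 1) (fun k => by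
      rw [hp_def, ofScalars_norm]
      simpa using hb1 (n * k))
    simpa using this
  have hball : HasFPowerSeriesOnBall p.sum p 0 1 :=
    (p.hasFPowerSeriesOnBall (lt_of_lt_of_le one_pos hrad)).mono one_pos hrad
  set G : ℂ → ℂ := p.sum with hG_def
  have hGdiff : DifferentiableOn ℂ G (ball (0:ℂ) 1) := by
    have := hball.differentiableOn
    rwa [show Metric.eball (0:ℂ) 1 = ball (0:ℂ) 1 by
      rw [show (1:ℝ≥0∞) = ((1:ℝ≥0):ℝ≥0∞) by norm_num, Metric.emetric_ball_nnreal]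
      norm_num] at this
  have hG0 : G 0 = b 0 := by
    have h1 := hball.coeff_zero (fun _ => 0)
    have h2 : p.coeff 0 = d 0 := lem_coeff d 0
    rw [FormalMultilinearSeries.coeff] at h2
    have h3 : d 0 = b 0 := by rw [hd_def]; norm_num
    rw [← h3, ← h2, ← h1]
    congr 1
    exact funext fun i => i.elim0
  have hGderiv : deriv G 0 = b n := by
    have h1 := hball.hasFPowerSeriesAt.deriv
    have h2 : p.coeff 1 = d 1 := lem_coeff d 1
    have h3 : d 1 = b n := by rw [hd_def]; norm_num
    rw [h1]
    rw [FormalMultilinearSeries.coeff] at h2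
    calc (p 1) (fun _ => 1) = (p 1) 1 := rfl
    _ = d 1 := h2
    _ = b n := h3
  -- Bound ‖G w‖ ≤ 1 on the unit ball
  have hGbound : ∀ w ∈ ball (0:ℂ) 1, ‖G w‖ ≤ 1 := by
    intro w hw
    rw [mem_ball_zero_iff] at hw
    obtain ⟨z, hzw⟩ := IsAlgClosed.exists_pow_nat_eq w (Nat.pos_of_ne_zero hn0)
    have hz1 : ‖z‖ < 1 := by
      by_contra h
      push_neg at h
      have h1 : (1:ℝ) ≤ ‖z‖ ^ n := one_le_pow₀ h
      rw [← norm_pow, hzw] at h1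
      linarith
    set ω : ℂ := Complex.exp (2 * ↑π * I / n) with hω_def
    have hω : IsPrimitiveRoot ω n := Complex.isPrimitiveRoot_exp n hn0
    have hωn : ‖ω‖ = 1 := by
      rw [hω_def, show 2 * (π:ℂ) * I / n = ((2 * π / n : ℝ) : ℂ) * I by push_cast; ring]
      exact Complex.norm_exp_ofReal_mul_I _
    have hmem : ∀ j : ℕ, ω ^ j * z ∈ ball (0:ℂ) 1 := by
      intro j
      rw [mem_ball_zero_iff, norm_mul, norm_pow, hωn, one_pow, one_mul]
      exact hz1
    set S : ℂ := (n:ℂ)⁻¹ * ∑ j ∈ Finset.range n, g (ω ^ j * z) with hS_def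
    have havg : HasSum (fun m => (n:ℂ)⁻¹ * ∑ j ∈ Finset.range n, b m * (ω ^ j * z) ^ m) S :=
      (hasSum_sum fun j _ => hb _ (hmem j)).mul_left _
    have hfun : (fun m => (n:ℂ)⁻¹ * ∑ j ∈ Finset.range n, b m * (ω ^ j * z) ^ m)
        = fun m => if n ∣ m then b m * z ^ m else 0 := by
      funext m
      have hsum : ∑ j ∈ Finset.range n, b m * (ω ^ j * z) ^ m
          = b m * z ^ m * ∑ j ∈ Finset.range n, (ω ^ m) ^ j := by
        rw [Finset.mul_sum]
        refine Finset.sum_congr rfl fun j _ => ?_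
        rw [mul_pow, ← pow_mul, mul_comm j m, pow_mul]
        ring
      rw [hsum]
      by_cases hdvd : n ∣ m
      · rw [if_pos hdvd]
        have hω1 : (ω ^ m) = 1 := (hω.pow_eq_one_iff_dvd m).2 hdvd
        rw [hω1]
        simp only [one_pow, Finset.sum_const, Finset.card_range, nsmul_eq_mul, mul_one]
        field_simp
      · rw [if_neg hdvd]
        have hne : ω ^ m ≠ 1 := fun h => hdvd ((hω.pow_eq_one_iff_dvd m).1 h)
        rw [geom_sum_eq hne]
        have hωmn : (ω ^ m) ^ n = 1 := by
          rw [← pow_mul, mul_comm, pow_mul, hω.pow_eq_one, one_pow]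
        rw [hωmn]
        simp
    rw [hfun] at havg
    have hinj : Function.Injective (fun k : ℕ => n * k) := fun x y h => by
      exact Nat.eq_of_mul_eq_mul_left (Nat.pos_of_ne_zero hn0) h
    have hvanish : ∀ m, m ∉ Set.range (fun k : ℕ => n * k) →
        (if n ∣ m then b m * z ^ m else 0) = 0 := by
      intro m hm
      rw [if_neg]
      rintro ⟨k, hk⟩
      exact hm ⟨k, hk.symm⟩
    have hcomp := (Function.Injective.hasSum_iff hinj hvanish).2 havg
    have hfun2 : ((fun m => if n ∣ m then b m * z ^ m else 0) ∘ fun k => n * k)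
        = fun k => d k * w ^ k := by
      funext k
      simp only [Function.comp_apply]
      rw [if_pos ⟨k, rfl⟩, hd_def, ← hzw, ← pow_mul]
    rw [hfun2] at hcomp
    have hGw : G w = S := by
      have hps : HasSum (fun k => p k fun _ => w) S := by
        convert hcomp using 1
        funext k
        rw [hp_def, ofScalars_apply_eq, smul_eq_mul]
      exact hps.tsum_eq
    rw [hGw, hS_def]
    have hsumle : ∑ j ∈ Finset.range n, ‖g (ω ^ j * z)‖ ≤ (n:ℝ) := by
      calc ∑ j ∈ Finset.range n, ‖g (ω ^ j * z)‖ ≤ ∑ _j ∈ Finset.range n, (1:ℝ) :=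
        Finset.sum_le_sum fun j _ => hle _ (hmem j)
      _ = n := by simp
    calc ‖(n:ℂ)⁻¹ * ∑ j ∈ Finset.range n, g (ω ^ j * z)‖
        ≤ ‖(n:ℂ)⁻¹‖ * ∑ j ∈ Finset.range n, ‖g (ω ^ j * z)‖ := by
          rw [norm_mul]
          gcongr
          exact norm_sum_le _ _
      _ ≤ (n:ℝ)⁻¹ * n := by
          rw [norm_inv, Complex.norm_natCast]
          gcongr
      _ = 1 := by
          field_simp
  have hsp := lem_schwarz_pick hGdiff hGbound
  rw [hGderiv, hG0] at hsp
  exact hsp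

set_option maxHeartbeats 1000000 in
/-- **Generalized Bohr inequality.** If `f` is a bounded holomorphic function on the open disk
`D_R = {z : |z| < R}` with power series expansion `f z = ∑ aₙ zⁿ`, then for every `z` with
`|z| ≤ R / 3`, the majorant series converges and `∑ |aₙ| |z|ⁿ ≤ sup_{w ∈ D_R} |f w|`. -/
theorem stmt_0 (R : ℝ) (hR : 0 < R) (f : ℂ → ℂ) (a : ℕ → ℂ)
    (hf : DifferentiableOn ℂ f (ball (0 : ℂ) R))
    (hbd : BddAbove ((fun w => ‖f w‖) '' ball (0 : ℂ) R))
    (ha : ∀ z ∈ ball (0 : ℂ) R, HasSum (fun n => a n * z ^ n) (f z))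
    (z : ℂ) (hz : ‖z‖ ≤ R / 3) :
    Summable (fun n => ‖a n‖ * ‖z‖ ^ n) ∧
      ∑' n, ‖a n‖ * ‖z‖ ^ n ≤ sSup ((fun w => ‖f w‖) '' ball (0 : ℂ) R) := by
  set M := sSup ((fun w => ‖f w‖) '' ball (0 : ℂ) R) with hM_def
  have hM : ∀ w ∈ ball (0:ℂ) R, ‖f w‖ ≤ M := fun w hw => le_csSup hbd ⟨w, hw, rfl⟩
  have hM0 : 0 ≤ M := le_trans (norm_nonneg _) (hM 0 (by simp [hR]))
  have hcau : ∀ n, ‖a n‖ * R ^ n ≤ M := lem_cauchy hR hf hM ha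
  have hzR : ‖z‖ / R ≤ 1 / 3 := by
    rw [div_le_div_iff₀ hR (by norm_num)]
    linarith
  have hterm : ∀ n, ‖a n‖ * ‖z‖ ^ n ≤ M * (1/3 : ℝ) ^ n := by
    intro n
    have h1 : ‖a n‖ * ‖z‖ ^ n = (‖a n‖ * R ^ n) * (‖z‖ / R) ^ n := by
      rw [div_pow]
      field_simp
    rw [h1]
    exact mul_le_mul (hcau n) (pow_le_pow_left₀ (by positivity) hzR n) (by positivity) hM0
  have hsummable : Summable (fun n => ‖a n‖ * ‖z‖ ^ n) := by
    apply Summable.of_nonneg_of_le (fun n => by positivity) hterm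
    exact (summable_geometric_of_lt_one (by norm_num) (by norm_num)).mul_left M
  refine ⟨hsummable, ?_⟩
  by_cases hMz : M = 0
  · have hz0 : ∀ n, ‖a n‖ * ‖z‖ ^ n = 0 := by
      intro n
      have h1 := hcau n
      rw [hMz] at h1
      have h2 : ‖a n‖ = 0 := by
        nlinarith [pow_pos hR n, norm_nonneg (a n)]
      rw [h2, zero_mul]
    rw [show (fun n => ‖a n‖ * ‖z‖ ^ n) = fun _ => (0:ℝ) from funext hz0, tsum_zero, hMz]
  · have hMpos : 0 < M := lt_of_le_of_ne hM0 (Ne.symm hMz)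
    have hMC : ((M:ℝ):ℂ) ≠ 0 := by exact_mod_cast hMz
    set g : ℂ → ℂ := fun ζ => f ((R:ℂ) * ζ) / (M:ℂ) with hg_def
    set b : ℕ → ℂ := fun m => a m * (R:ℂ) ^ m / (M:ℂ) with hb_def
    have hmaps : ∀ ζ ∈ ball (0:ℂ) 1, (R:ℂ) * ζ ∈ ball (0:ℂ) R := by
      intro ζ hζ
      rw [mem_ball_zero_iff] at hζ ⊢
      rw [norm_mul, Complex.norm_real, Real.norm_eq_abs, abs_of_pos hR]
      calc R * ‖ζ‖ < R * 1 := by gcongr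
      _ = R := mul_one R
    have hgd : DifferentiableOn ℂ g (ball (0:ℂ) 1) := by
      apply DifferentiableOn.div_const
      exact hf.comp ((differentiable_id.const_mul _).differentiableOn) hmaps
    have hgb : ∀ ζ ∈ ball (0:ℂ) 1, HasSum (fun m => b m * ζ ^ m) (g ζ) := by
      intro ζ hζ
      have h1 := (ha _ (hmaps ζ hζ)).div_const (M:ℂ)
      convert h1 using 3 with m
      · rfl
      rw [hb_def]
      simp only [mul_pow]
      ring
    have hgle : ∀ ζ ∈ ball (0:ℂ) 1, ‖g ζ‖ ≤ 1 := by
      intro ζ hζ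
      rw [hg_def]
      simp only [norm_div, Complex.norm_real, Real.norm_eq_abs, abs_of_pos hMpos]
      rw [div_le_one hMpos]
      exact hM _ (hmaps ζ hζ)
    have hbnorm : ∀ m, ‖b m‖ = ‖a m‖ * R ^ m / M := by
      intro m
      rw [hb_def]
      simp only [norm_div, norm_mul, norm_pow, Complex.norm_real, Real.norm_eq_abs,
        abs_of_pos hR, abs_of_pos hMpos]
    have hkey : ∀ n, 1 ≤ n → ‖a n‖ * R ^ n ≤ M - ‖a 0‖ ^ 2 / M := by
      intro n hn
      have h1 := lem_unit hgd hgb hgle hn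
      rw [hbnorm n, hbnorm 0] at h1
      simp only [pow_zero, mul_one] at h1
      rw [div_le_iff₀ hMpos] at h1
      calc ‖a n‖ * R ^ n ≤ (1 - (‖a 0‖ / M) ^ 2) * M := h1
      _ = M - ‖a 0‖ ^ 2 / M := by field_simp
    have h00 : ‖a 0‖ ≤ M := by
      have := hcau 0
      simpa using this
    set K := M - ‖a 0‖ ^ 2 / M with hK_def
    have hK0 : 0 ≤ K := by
      rw [hK_def, sub_nonneg, div_le_iff₀ hMpos]
      nlinarith [norm_nonneg (a 0)]
    have htail : ∀ n : ℕ, ‖a (n+1)‖ * ‖z‖ ^ (n+1) ≤ K * (1/3:ℝ) ^ (n+1) := by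
      intro n
      have h1 : ‖a (n+1)‖ * ‖z‖ ^ (n+1) = (‖a (n+1)‖ * R ^ (n+1)) * (‖z‖ / R) ^ (n+1) := by
        rw [div_pow]
        field_simp
      rw [h1]
      exact mul_le_mul (hkey (n+1) (by omega)) (pow_le_pow_left₀ (by positivity) hzR (n+1))
        (by positivity) hK0
    have hgeo : Summable (fun n : ℕ => K * (1/3:ℝ) ^ (n+1)) := by
      apply Summable.mul_left
      exact ((summable_geometric_of_lt_one (by norm_num) (by norm_num)).comp_injective
        (add_left_injective 1))
    have htsum_tail : ∑' n : ℕ, ‖a (n+1)‖ * ‖z‖ ^ (n+1) ≤ K / 2 := by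
      calc ∑' n : ℕ, ‖a (n+1)‖ * ‖z‖ ^ (n+1) ≤ ∑' n : ℕ, K * (1/3:ℝ) ^ (n+1) :=
        ((_root_.summable_nat_add_iff 1).2 hsummable).tsum_le_tsum htail hgeo
      _ = K * ∑' n : ℕ, (1/3:ℝ) ^ (n+1) := tsum_mul_left
      _ = K * (1/2) := by
        have hg2 : ∑' n : ℕ, (1/3:ℝ) ^ (n+1) = 1/2 := by
          calc ∑' n : ℕ, (1/3:ℝ) ^ (n+1) = ∑' n : ℕ, (1/3:ℝ) * (1/3:ℝ) ^ n :=
            tsum_congr fun n => by rw [pow_succ]; ring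
          _ = (1/3:ℝ) * ∑' n : ℕ, (1/3:ℝ) ^ n := tsum_mul_left
          _ = 1/2 := by
            rw [tsum_geometric_of_lt_one (by norm_num) (by norm_num)]
            norm_num
        rw [hg2]
      _ = K / 2 := by ring
    rw [Summable.tsum_eq_zero_add hsummable]
    simp only [pow_zero, mul_one]
    have hfin : ‖a 0‖ + K / 2 ≤ M := by
      rw [hK_def]
      have hA : ‖a 0‖ ^ 2 / M * M = ‖a 0‖ ^ 2 := div_mul_cancel₀ _ hMpos.ne'
      nlinarith [sq_nonneg (M - ‖a 0‖), hA, hMpos, h00, norm_nonneg (a 0)]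
    linarith [htsum_tail]
end

section
/- Sharpness of the generalized Bohr radius: Let R > 0 and let β ∈ ℂ satisfy R/3 < |β| < R. Then there exists a bounded holomorphic function f on the open disk D_R = {z ∈ ℂ : |z| < R}, with power series expansion f(z) = ∑_{n=0}^∞ b_n z^n at the origin, such that ∑_{n=0}^∞ |b_n| |β|^n > sup_{w ∈ D_R} |f(w)|. In particular, the Bohr radius of D_R with respect to H^∞(D_R) equals R/3. -/
set_option maxHeartbeats 1000000


open Metric

/-- **Sharpness of the generalized Bohr radius.** For `R > 0` and any `β ∈ ℂ` with
`R / 3 < |β| < R`, there is a bounded holomorphic function `f` on the open disk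
`D_R = {z : |z| < R}`, with power series expansion `f z = ∑ bₙ zⁿ`, whose majorant series at
`β` converges and strictly exceeds `sup_{w ∈ D_R} |f w|`.  In particular the Bohr radius of
`D_R` with respect to `H^∞(D_R)` equals `R / 3`. -/
theorem stmt_1 (R : ℝ) (hR : 0 < R) (β : ℂ) (hβ₁ : R / 3 < ‖β‖) (hβ₂ : ‖β‖ < R) :
    ∃ (f : ℂ → ℂ) (b : ℕ → ℂ),
      DifferentiableOn ℂ f (ball (0 : ℂ) R) ∧
      BddAbove ((fun w => ‖f w‖) '' ball (0 : ℂ) R) ∧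
      (∀ z ∈ ball (0 : ℂ) R, HasSum (fun n => b n * z ^ n) (f z)) ∧
      Summable (fun n => ‖b n‖ * ‖β‖ ^ n) ∧
      sSup ((fun w => ‖f w‖) '' ball (0 : ℂ) R) < ∑' n, ‖b n‖ * ‖β‖ ^ n := by
  have hRne : (R : ℝ) ≠ 0 := ne_of_gt hR
  have hRCne : (R : ℂ) ≠ 0 := by exact_mod_cast hRne
  set t : ℝ := ‖β‖ / R with ht_def
  have ht1 : t < 1 := (div_lt_one hR).mpr hβ₂
  have ht3 : 1 / 3 < t := by rw [ht_def, lt_div_iff₀ hR]; linarith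
  have ht0 : 0 < t := by linarith
  set a : ℝ := (1 + (1 - t) / (2 * t)) / 2 with ha_def
  have hx0 : 0 < (1 - t) / (2 * t) := div_pos (by linarith) (by linarith)
  have hx1 : (1 - t) / (2 * t) < 1 := by
    rw [div_lt_one (by linarith)]; linarith
  have ha0 : 0 < a := by rw [ha_def]; linarith
  have ha1 : a < 1 := by rw [ha_def]; linarith
  have hcrit : 1 - t < 2 * a * t := by
    have h2t : 2 * a * t = t + (1 - t) / 2 := by
      rw [ha_def]; field_simp
    rw [h2t]; linarith
  have hat1 : a * t < 1 := by nlinarith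
  have hat0 : 0 < 1 - a * t := by linarith
  have ha2 : 0 < 1 - a ^ 2 := by nlinarith
  -- the function
  set f : ℂ → ℂ := fun z => ((a : ℂ) - z / R) / (1 - (a : ℂ) * z / R) with hf_def
  set b : ℕ → ℂ := fun n =>
    if n = 0 then (a : ℂ) else -(1 - (a : ℂ) ^ 2) * (a : ℂ) ^ (n - 1) / (R : ℂ) ^ n
    with hb_def
  have hb0 : b 0 = (a : ℂ) := by simp [hb_def]
  have hbs : ∀ n : ℕ, b (n + 1) = -(1 - (a : ℂ) ^ 2) * (a : ℂ) ^ n / (R : ℂ) ^ (n + 1) := by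
    intro n; rw [hb_def]; simp
  -- the quantity a*z/R has small norm on the ball
  have hnorm : ∀ z : ℂ, ‖z‖ < R → ‖(a : ℂ) * z / R‖ < 1 := by
    intro z hz
    rw [norm_div, norm_mul, Complex.norm_real, Complex.norm_real, Real.norm_eq_abs,
      Real.norm_eq_abs, abs_of_pos ha0, abs_of_pos hR, div_lt_one hR]
    nlinarith [norm_nonneg z]
  -- denominator nonzero on the ball
  have hden : ∀ z : ℂ, ‖z‖ < R → (1 - (a : ℂ) * z / R) ≠ 0 := by
    intro z hz h
    rw [sub_eq_zero] at h
    have := hnorm z hz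
    rw [← h] at this
    simp at this
  -- pointwise bound ‖f z‖ ≤ 1
  have hbound : ∀ z : ℂ, ‖z‖ < R → ‖f z‖ ≤ 1 := by
    intro z hz
    set w : ℂ := z / R with hw_def
    have hwnorm : ‖w‖ < 1 := by
      rw [hw_def, norm_div, Complex.norm_real, Real.norm_eq_abs, abs_of_pos hR,
        div_lt_one hR]; exact hz
    have hw2 : w.re ^ 2 + w.im ^ 2 < 1 := by
      have h1 : ‖w‖ ^ 2 = w.re ^ 2 + w.im ^ 2 := by
        rw [Complex.sq_norm, Complex.normSq_apply]; ring
      nlinarith [norm_nonneg w]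
    have hkey : ‖(a : ℂ) - w‖ ^ 2 ≤ ‖1 - (a : ℂ) * w‖ ^ 2 := by
      rw [Complex.sq_norm, Complex.sq_norm,
        Complex.normSq_apply, Complex.normSq_apply]
      simp only [Complex.sub_re, Complex.sub_im, Complex.mul_re, Complex.mul_im,
        Complex.ofReal_re, Complex.ofReal_im, Complex.one_re, Complex.one_im]
      nlinarith [hw2, ha0, ha1]
    have hkey' : ‖(a : ℂ) - w‖ ≤ ‖1 - (a : ℂ) * w‖ := by
      nlinarith [norm_nonneg ((a : ℂ) - w), norm_nonneg (1 - (a : ℂ) * w)]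
    have hfz : f z = ((a : ℂ) - w) / (1 - (a : ℂ) * w) := by
      rw [hf_def, hw_def]; simp [mul_div_assoc]
    rw [hfz, norm_div]
    exact div_le_one_of_le₀ hkey' (norm_nonneg _)
  clear_value t a f b
  refine ⟨f, b, ?_, ?_, ?_, ?_, ?_⟩
  · -- differentiability
    intro z hz
    rw [mem_ball_zero_iff] at hz
    rw [hf_def]
    apply DifferentiableAt.differentiableWithinAt
    apply DifferentiableAt.div
    · fun_prop
    · fun_prop
    · exact hden z hz
  · -- bounded above
    refine ⟨1, ?_⟩
    rintro x ⟨z, hz, rfl⟩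
    exact hbound z (mem_ball_zero_iff.mp hz)
  · -- power series
    intro z hz
    rw [mem_ball_zero_iff] at hz
    set w : ℂ := (a : ℂ) * z / R with hw_def
    have hw : ‖w‖ < 1 := hnorm z hz
    have hne : (1 : ℂ) - w ≠ 0 := hden z hz
    have hgeo : HasSum (fun n : ℕ => w ^ n) (1 - w)⁻¹ := hasSum_geometric_of_norm_lt_one hw
    have h1 : HasSum (fun n : ℕ => b (n + 1) * z ^ (n + 1))
        ((-(1 - (a : ℂ) ^ 2) * z / R) * (1 - w)⁻¹) := by
      have := hgeo.mul_left (-(1 - (a : ℂ) ^ 2) * z / R)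
      convert this using 2 with n
      · rfl
      rw [hbs n, hw_def]
      field_simp
      have hRn : (R:ℂ) ^ n * (R:ℂ)⁻¹ ^ n = 1 := by rw [← mul_pow, mul_inv_cancel₀ hRCne, one_pow]
      linear_combination (-((a:ℂ) ^ 2 * (a:ℂ) ^ n * z * z ^ n * (R:ℂ) - (a:ℂ) ^ n * z * z ^ n * (R:ℂ))) * hRn
    have h2 := (hasSum_nat_add_iff (f := fun n => b n * z ^ n) 1).mp h1
    simp only [Finset.range_one, Finset.sum_singleton, hb0, pow_zero, mul_one] at h2
    convert h2 using 1
    · rfl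
    rw [hf_def, hw_def]
    have hne' : (1 : ℂ) - (a : ℂ) * z / R ≠ 0 := hden z hz
    have e : (1 : ℂ) - (a : ℂ) * z / R = ((R : ℂ) - (a : ℂ) * z) / R := by field_simp
    have hne2 : (R : ℂ) - (a : ℂ) * z ≠ 0 := fun h => hne' (by rw [e, h, zero_div])
    field_simp [hne', hne2]
    ring
  · -- summable majorant
    have hgeo : HasSum (fun n : ℕ => (a * t) ^ n) (1 - a * t)⁻¹ := by
      apply hasSum_geometric_of_norm_lt_one
      rw [Real.norm_eq_abs, abs_of_pos (by positivity)]; exact hat1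
    have h1 : HasSum (fun n : ℕ => ‖b (n + 1)‖ * ‖β‖ ^ (n + 1))
        (((1 - a ^ 2) * t) * (1 - a * t)⁻¹) := by
      have := hgeo.mul_left ((1 - a ^ 2) * t)
      convert this using 2 with n
      · rfl
      have hcast : b (n + 1) = ((-((1 - a ^ 2) * a ^ n / R ^ (n + 1)) : ℝ) : ℂ) := by
        rw [hbs n]; push_cast; ring
      rw [hcast, Complex.norm_real, Real.norm_eq_abs, abs_neg,
        abs_of_nonneg (by positivity), ht_def]
      field_simp
      have hRn : R ^ n * R⁻¹ ^ n = 1 := by rw [← mul_pow, mul_inv_cancel₀ hRne, one_pow]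
      linear_combination (-(a ^ n * ‖β‖ * ‖β‖ ^ n * R)) * hRn
    have h2 := (hasSum_nat_add_iff (f := fun n => ‖b n‖ * ‖β‖ ^ n) 1).mp h1
    exact h2.summable
  · -- the strict inequality
    have hgeo : HasSum (fun n : ℕ => (a * t) ^ n) (1 - a * t)⁻¹ := by
      apply hasSum_geometric_of_norm_lt_one
      rw [Real.norm_eq_abs, abs_of_pos (by positivity)]; exact hat1
    have h1 : HasSum (fun n : ℕ => ‖b (n + 1)‖ * ‖β‖ ^ (n + 1))
        (((1 - a ^ 2) * t) * (1 - a * t)⁻¹) := by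
      have := hgeo.mul_left ((1 - a ^ 2) * t)
      convert this using 2 with n
      · rfl
      have hcast : b (n + 1) = ((-((1 - a ^ 2) * a ^ n / R ^ (n + 1)) : ℝ) : ℂ) := by
        rw [hbs n]; push_cast; ring
      rw [hcast, Complex.norm_real, Real.norm_eq_abs, abs_neg,
        abs_of_nonneg (by positivity), ht_def]
      field_simp
      have hRn : R ^ n * R⁻¹ ^ n = 1 := by rw [← mul_pow, mul_inv_cancel₀ hRne, one_pow]
      linear_combination (-(a ^ n * ‖β‖ * ‖β‖ ^ n * R)) * hRn
    have h2 := (hasSum_nat_add_iff (f := fun n => ‖b n‖ * ‖β‖ ^ n) 1).mp h1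
    simp only [Finset.range_one, Finset.sum_singleton, hb0, pow_zero, mul_one] at h2
    have hb0n : ‖(a : ℂ)‖ = a := by
      rw [Complex.norm_real, Real.norm_eq_abs, abs_of_pos ha0]
    rw [h2.tsum_eq]
    have hS : 1 < (1 - a ^ 2) * t * (1 - a * t)⁻¹ + ‖(a : ℂ)‖ := by
      rw [hb0n]
      rw [← sub_lt_iff_lt_add, ← div_eq_mul_inv, lt_div_iff₀ hat0]
      nlinarith [mul_pos (sub_pos.mpr ha1) (by linarith : (0:ℝ) < t + 2 * a * t - 1)]
    have hsup : sSup ((fun w => ‖f w‖) '' ball (0 : ℂ) R) ≤ 1 := by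
      apply csSup_le
      · exact ⟨‖f 0‖, ⟨0, by simpa using hR, rfl⟩⟩
      · rintro x ⟨z, hz, rfl⟩
        exact hbound z (mem_ball_zero_iff.mp hz)
    linarith
end

section
/- Power-series von Neumann inequality for operators of norm at most R/3: Let X be a complex Banach space, R > 0, and let T be a bounded linear operator on X with ‖T‖ ≤ R/3. Let f be a bounded holomorphic function on the open disk D_R = {z ∈ ℂ : |z| < R} with power series expansion f(z) = ∑_{n=0}^∞ a_n z^n. Then the series ∑_{n=0}^∞ a_n T^n converges absolutely in operator norm and ‖∑_{n=0}^∞ a_n T^n‖ ≤ sup_{w ∈ D_R} |f(w)|. -/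
open Metric Complex Real

lemma aux_mobius (α w : ℂ) (hα : ‖α‖ < 1) (hw : ‖w‖ < 1) :
    ‖(w - α) / (1 - (starRingEnd ℂ) α * w)‖ < 1 := by
  have key : Complex.normSq (1 - (starRingEnd ℂ) α * w) - Complex.normSq (w - α)
      = (1 - Complex.normSq α) * (1 - Complex.normSq w) := by
    simp only [Complex.normSq_apply, Complex.sub_re, Complex.sub_im, Complex.mul_re,
      Complex.mul_im, Complex.one_re, Complex.one_im, Complex.conj_re, Complex.conj_im]
    ring
  have hα2 : Complex.normSq α < 1 := by
    rw [← Complex.sq_norm]; nlinarith [norm_nonneg α]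
  have hw2 : Complex.normSq w < 1 := by
    rw [← Complex.sq_norm]; nlinarith [norm_nonneg w]
  have hlt : Complex.normSq (w - α) < Complex.normSq (1 - (starRingEnd ℂ) α * w) := by
    nlinarith [Complex.normSq_nonneg (w - α)]
  have hpos : 0 < Complex.normSq (1 - (starRingEnd ℂ) α * w) :=
    lt_of_le_of_lt (Complex.normSq_nonneg _) hlt
  have hden : ‖w - α‖ < ‖1 - (starRingEnd ℂ) α * w‖ := by
    rw [Complex.norm_def, Complex.norm_def]
    exact Real.sqrt_lt_sqrt (Complex.normSq_nonneg _) hlt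
  rw [norm_div, div_lt_one (lt_of_le_of_lt (norm_nonneg _) hden)]
  exact hden

lemma aux_schwarz_pick {h : ℂ → ℂ} {ρ M : ℝ} (hρ : 0 < ρ) (hM : 0 < M)
    (hd : DifferentiableOn ℂ h (ball 0 ρ))
    (hb : ∀ z ∈ ball (0 : ℂ) ρ, ‖h z‖ < M) :
    ‖deriv h 0‖ * (M * ρ) ≤ (M ^ 2 - ‖h 0‖ ^ 2) := by
  have h0m : (0 : ℂ) ∈ ball (0 : ℂ) ρ := mem_ball_self hρ
  have hMn : ‖(M : ℂ)‖ = M := by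
    simp [Complex.norm_real, abs_of_pos hM]
  set α : ℂ := h 0 / M with hαdef
  have hαnorm : ‖α‖ = ‖h 0‖ / M := by rw [hαdef, norm_div, hMn]
  have hαn : ‖α‖ < 1 := by rw [hαnorm]; exact (div_lt_one hM).2 (hb 0 h0m)
  have hg : ∀ z ∈ ball (0 : ℂ) ρ, ‖h z / M‖ < 1 := by
    intro z hz
    rw [norm_div, hMn]
    exact (div_lt_one hM).2 (hb z hz)
  set G : ℂ → ℂ := fun z => (h z / M - α) / (1 - (starRingEnd ℂ) α * (h z / M)) with hGdef
  have hden : ∀ z ∈ ball (0 : ℂ) ρ, (1 - (starRingEnd ℂ) α * (h z / M)) ≠ 0 := by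
    intro z hz hc
    have h1 : ‖(starRingEnd ℂ) α * (h z / M)‖ < 1 := by
      rw [norm_mul, RCLike.norm_conj]
      exact mul_lt_one_of_nonneg_of_lt_one_left (norm_nonneg _) hαn (hg z hz).le
    rw [sub_eq_zero] at hc
    rw [← hc] at h1
    simp at h1
  have hGd : DifferentiableOn ℂ G (ball 0 ρ) := by
    apply DifferentiableOn.div
    · exact (hd.div_const _).sub_const _
    · exact (differentiableOn_const _).sub ((differentiableOn_const _).mul (hd.div_const _))
    · exact hden
  have hG0 : G 0 = 0 := by simp [hGdef, hαdef]
  have hGmaps : Set.MapsTo G (ball (0:ℂ) ρ) (ball (G 0) 1) := by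
    intro z hz
    rw [hG0, mem_ball, dist_zero_right]
    exact aux_mobius α (h z / M) hαn (hg z hz)
  have hder := Complex.norm_deriv_le_div_of_mapsTo_ball hGd (hGmaps.mono_right ball_subset_closedBall) hρ
  have hhd : DifferentiableAt ℂ h 0 := hd.differentiableAt (isOpen_ball.mem_nhds h0m)
  have hden0 : (1 : ℂ) - (starRingEnd ℂ) α * α ≠ 0 := by
    have := hden 0 h0m; rwa [← hαdef] at this
  have hα0 : (starRingEnd ℂ) α * α = ((‖α‖ ^ 2 : ℝ) : ℂ) := by
    rw [mul_comm, Complex.mul_conj']; push_cast; ring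
  have hone : (1 : ℝ) - ‖α‖ ^ 2 ≠ 0 := by nlinarith [norm_nonneg α, hαn]
  have hDG : deriv G 0 = deriv h 0 / M / ((1 : ℂ) - (starRingEnd ℂ) α * α) := by
    have h1 : HasDerivAt (fun z => h z / M - α) (deriv h 0 / M) 0 :=
      (hhd.hasDerivAt.div_const _).sub_const _
    have h2 : HasDerivAt (fun z => (1 : ℂ) - (starRingEnd ℂ) α * (h z / M))
        (-((starRingEnd ℂ) α * (deriv h 0 / M))) 0 :=
      ((hhd.hasDerivAt.div_const (M:ℂ)).const_mul ((starRingEnd ℂ) α)).const_sub 1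
    have hden0' : (1 : ℂ) - (starRingEnd ℂ) α * (h 0 / M) ≠ 0 := hden 0 h0m
    have hd3 := (h1.div h2 hden0').deriv
    rw [hGdef]
    show deriv ((fun z => h z / (M:ℂ) - α) / fun z => 1 - (starRingEnd ℂ) α * (h z / M)) 0 = _
    rw [hd3, ← hαdef, sub_self, zero_mul, sub_zero, sq, mul_div_assoc]
    rw [div_mul_cancel_left₀ hden0, ← div_eq_mul_inv]
  have hnormDG : ‖deriv G 0‖ = ‖deriv h 0‖ / M / (1 - ‖α‖ ^ 2) := by
    rw [hDG, norm_div, norm_div, hMn, hα0]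
    congr 1
    have : ((1 : ℂ) - ((‖α‖ ^ 2 : ℝ) : ℂ)) = (((1 - ‖α‖ ^ 2 : ℝ)) : ℂ) := by push_cast; ring
    rw [this, Complex.norm_real, Real.norm_eq_abs, abs_of_pos]
    nlinarith [hαn, norm_nonneg α]
  rw [hnormDG] at hder
  have honepos : (0:ℝ) < 1 - ‖α‖ ^ 2 := by nlinarith [hαn, norm_nonneg α]
  rw [div_div, div_le_div_iff₀ (by positivity) hρ] at hder
  have hα2 : ‖α‖ ^ 2 = ‖h 0‖ ^ 2 / M ^ 2 := by rw [hαnorm]; ring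
  rw [hα2] at hder
  have h5 := mul_le_mul_of_nonneg_right hder hM.le
  have h6 : 1 * (M * (1 - ‖h 0‖ ^ 2 / M ^ 2)) * M = M ^ 2 - ‖h 0‖ ^ 2 := by
    field_simp
  nlinarith [h5, h6]

lemma aux_root_sum (m n : ℕ) (hm : 1 ≤ m) :
    ∑ j ∈ Finset.range m, (Complex.exp (2 * Real.pi * Complex.I / m)) ^ (j * n)
      = if m ∣ n then (m : ℂ) else 0 := by
  have hprim : IsPrimitiveRoot (Complex.exp (2 * Real.pi * Complex.I / m)) m :=
    Complex.isPrimitiveRoot_exp m (by omega)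
  set ω := Complex.exp (2 * Real.pi * Complex.I / m)
  have hrw : ∀ j, ω ^ (j * n) = (ω ^ n) ^ j := by
    intro j; rw [mul_comm, pow_mul]
  simp only [hrw]
  by_cases hdvd : m ∣ n
  · simp [hprim.pow_eq_one_iff_dvd n |>.2 hdvd, hdvd]
  · have hne : ω ^ n ≠ 1 := fun hc => hdvd ((hprim.pow_eq_one_iff_dvd n).1 hc)
    rw [geom_sum_eq hne]
    have : (ω ^ n) ^ m = 1 := by
      rw [← pow_mul, mul_comm, pow_mul, hprim.pow_eq_one, one_pow]
    rw [this]
    simp [hdvd]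

lemma aux_avg {R : ℝ} {f : ℂ → ℂ} {a : ℕ → ℂ}
    (ha : ∀ z ∈ ball (0:ℂ) R, HasSum (fun n => a n * z ^ n) (f z))
    (m : ℕ) (hm : 1 ≤ m) {z : ℂ} (hz : z ∈ ball (0:ℂ) R) :
    HasSum (fun k => a (k * m) * (z ^ m) ^ k)
      ((∑ j ∈ Finset.range m, f ((Complex.exp (2 * Real.pi * Complex.I / m)) ^ j * z)) / m) := by
  set ω := Complex.exp (2 * Real.pi * Complex.I / m) with hωdef
  have hprim : IsPrimitiveRoot ω m := Complex.isPrimitiveRoot_exp m (by omega)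
  have hωabs : ‖ω‖ = 1 := by
    have h1 : ‖ω‖ ^ m = 1 := by
      rw [← norm_pow, hprim.pow_eq_one, norm_one]
    rcases lt_trichotomy ‖ω‖ 1 with hlt | heq | hgt
    · exfalso
      have := pow_lt_one₀ (norm_nonneg ω) hlt (n := m) (by omega)
      rw [h1] at this; exact lt_irrefl 1 this
    · exact heq
    · exfalso
      have := one_lt_pow₀ hgt (n := m) (by omega : m ≠ 0)
      rw [h1] at this; exact lt_irrefl 1 this
  have hmem : ∀ j, ω ^ j * z ∈ ball (0:ℂ) R := by
    intro j
    rw [mem_ball_zero_iff] at hz ⊢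
    rw [norm_mul]
    calc ‖ω ^ j‖ * ‖z‖ = ‖z‖ := by
          rw [norm_pow, hωabs, one_pow, one_mul]
      _ < R := hz
  have hsum1 : HasSum (fun n => ∑ j ∈ Finset.range m, a n * (ω ^ j * z) ^ n)
      (∑ j ∈ Finset.range m, f (ω ^ j * z)) :=
    hasSum_sum fun j _ => ha _ (hmem j)
  have hrw : (fun n => ∑ j ∈ Finset.range m, a n * (ω ^ j * z) ^ n)
      = fun n => if m ∣ n then (m : ℂ) * (a n * z ^ n) else 0 := by
    funext n
    have : ∀ j, a n * (ω ^ j * z) ^ n = (a n * z ^ n) * ω ^ (j * n) := by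
      intro j; rw [mul_pow, ← pow_mul]; ring
    simp only [this]
    rw [← Finset.mul_sum, aux_root_sum m n hm]
    split <;> ring_nf <;> simp
  rw [hrw] at hsum1
  have hinj : Function.Injective (fun k : ℕ => k * m) := fun x y hxy => by
    simpa [Nat.mul_left_inj (by omega : m ≠ 0)] using hxy
  have hsupp : ∀ x ∉ Set.range (fun k : ℕ => k * m),
      (if m ∣ x then (m : ℂ) * (a x * z ^ x) else 0) = 0 := by
    intro x hx
    rw [if_neg]
    intro ⟨c, hc⟩
    refine hx ⟨c, ?_⟩
    show c * m = x
    subst hc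
    exact Nat.mul_comm c m
  have hsum2 := (hinj.hasSum_iff hsupp).2 hsum1
  have hcomp : ((fun n => if m ∣ n then (m : ℂ) * (a n * z ^ n) else 0) ∘ (fun k : ℕ => k * m))
      = fun k => (m : ℂ) * (a (k * m) * (z ^ m) ^ k) := by
    funext k
    simp only [Function.comp_apply, if_pos (dvd_mul_left m k), ← pow_mul, mul_comm m k]
  rw [hcomp] at hsum2
  have := hsum2.div_const (m : ℂ)
  have hm0 : (m : ℂ) ≠ 0 := by exact_mod_cast (by omega : m ≠ 0)
  convert this using 2 with k
  exacts [rfl, (mul_div_cancel_left₀ _ hm0).symm]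

lemma aux_avg2 {R M : ℝ} {f : ℂ → ℂ} {a : ℕ → ℂ}
    (ha : ∀ z ∈ ball (0:ℂ) R, HasSum (fun n => a n * z ^ n) (f z))
    (hM : ∀ z ∈ ball (0:ℂ) R, ‖f z‖ ≤ M)
    (m : ℕ) (hm : 1 ≤ m) {z : ℂ} (hz : z ∈ ball (0:ℂ) R) :
    ∃ S : ℂ, HasSum (fun k => a (k * m) * (z ^ m) ^ k) S ∧ ‖S‖ ≤ M := by
  refine ⟨_, aux_avg ha m hm hz, ?_⟩
  set ω := Complex.exp (2 * Real.pi * Complex.I / m) with hωdef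
  have hprim : IsPrimitiveRoot ω m := Complex.isPrimitiveRoot_exp m (by omega)
  have hωabs : ‖ω‖ = 1 := by
    have h1 : ‖ω‖ ^ m = 1 := by
      rw [← norm_pow, hprim.pow_eq_one, norm_one]
    rcases lt_trichotomy ‖ω‖ 1 with hlt | heq | hgt
    · exact absurd h1 (by have := pow_lt_one₀ (norm_nonneg ω) hlt (n := m) (by omega); linarith)
    · exact heq
    · exact absurd h1 (by have := one_lt_pow₀ hgt (n := m) (by omega : m ≠ 0); linarith)
  have hmem : ∀ j, ω ^ j * z ∈ ball (0:ℂ) R := by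
    intro j
    rw [mem_ball_zero_iff] at hz ⊢
    rw [norm_mul, norm_pow, hωabs, one_pow, one_mul]
    exact hz
  rw [norm_div]
  have hnm : ‖(m : ℂ)‖ = (m : ℝ) := by
    simp
  rw [hnm]
  have hsum : ‖∑ j ∈ Finset.range m, f (ω ^ j * z)‖ ≤ (m : ℝ) * M := by
    calc ‖∑ j ∈ Finset.range m, f (ω ^ j * z)‖
        ≤ ∑ j ∈ Finset.range m, ‖f (ω ^ j * z)‖ := norm_sum_le _ _
      _ ≤ ∑ _j ∈ Finset.range m, M := Finset.sum_le_sum fun j _ => hM _ (hmem j)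
      _ = (m : ℝ) * M := by simp [mul_comm]
  have hmpos : (0 : ℝ) < m := by exact_mod_cast (by omega : 0 < m)
  rw [div_le_iff₀ hmpos]
  linarith [hsum]

lemma aux_coeff_bound {R : ℝ} (hR : 0 < R) {f : ℂ → ℂ} {a : ℕ → ℂ} {M : ℝ}
    (ha : ∀ z ∈ ball (0:ℂ) R, HasSum (fun n => a n * z ^ n) (f z))
    (hM : ∀ z ∈ ball (0:ℂ) R, ‖f z‖ ≤ M)
    (m : ℕ) (hm : 1 ≤ m) : ‖a m‖ * R ^ m ≤ 2 * (M - ‖f 0‖) := by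
  have h0mem : (0 : ℂ) ∈ ball (0:ℂ) R := mem_ball_self hR
  have hf0M : ‖f 0‖ ≤ M := hM 0 h0mem
  have hM0 : 0 ≤ M := le_trans (norm_nonneg _) hf0M
  have hRm : (0:ℝ) < R ^ m := by positivity
  set c : ℕ → ℂ := fun k => a (k * m) with hcdef
  set h : ℂ → ℂ := fun w => ∑' k, c k * w ^ k with hhdef
  -- every w in ball 0 (R^m) : HasSum with bound
  have key : ∀ w ∈ ball (0:ℂ) (R ^ m), ∃ S, HasSum (fun k => c k * w ^ k) S ∧ ‖S‖ ≤ M := by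
    intro w hw
    obtain ⟨z, hzw⟩ := IsAlgClosed.exists_pow_nat_eq w (n := m) (by omega)
    have hzb : z ∈ ball (0:ℂ) R := by
      rw [mem_ball_zero_iff] at hw ⊢
      by_contra hc
      push_neg at hc
      have : R ^ m ≤ ‖z‖ ^ m := pow_le_pow_left₀ hR.le hc m
      rw [← norm_pow, hzw] at this
      linarith
    obtain ⟨S, hS, hSb⟩ := aux_avg2 ha hM m hm hzb
    exact ⟨S, by rwa [hzw] at hS, hSb⟩
  have keyh : ∀ w ∈ ball (0:ℂ) (R ^ m), HasSum (fun k => c k * w ^ k) (h w) ∧ ‖h w‖ ≤ M := by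
    intro w hw
    obtain ⟨S, hS, hSb⟩ := key w hw
    have : h w = S := hS.tsum_eq
    rw [this]; exact ⟨hS, hSb⟩
  -- the power series
  set p : FormalMultilinearSeries ℂ ℂ ℂ := FormalMultilinearSeries.ofScalars ℂ c with hpdef
  have hpn : ∀ n, ‖p n‖ = ‖c n‖ := fun n => FormalMultilinearSeries.ofScalars_norm ℂ c n
  have hrad : ENNReal.ofReal (R ^ m) ≤ p.radius := by
    apply ENNReal.le_of_forall_nnreal_lt
    intro r hr
    rw [← ENNReal.ofReal_coe_nnreal, ENNReal.ofReal_lt_ofReal_iff hRm] at hr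
    have hrb : ((r : ℝ) : ℂ) ∈ ball (0:ℂ) (R ^ m) := by
      rw [mem_ball_zero_iff]
      simpa [_root_.abs_of_nonneg r.coe_nonneg] using hr
    obtain ⟨S, hS, _⟩ := key _ hrb
    have hbdd : BddAbove (Set.range fun k => ‖c k * ((r : ℝ) : ℂ) ^ k‖) := by
      have ht := hS.summable.tendsto_atTop_zero
      exact (ht.norm.bddAbove_range)
    obtain ⟨C, hC⟩ := hbdd
    apply p.le_radius_of_bound C
    intro n
    rw [hpn]
    have h9 := hC (Set.mem_range_self n)
    have h8 : ‖c n * ((r : ℝ) : ℂ) ^ n‖ = ‖c n‖ * (r : ℝ) ^ n := by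
      rw [norm_mul, norm_pow, Complex.norm_real, Real.norm_eq_abs,
        _root_.abs_of_nonneg r.coe_nonneg]
    rw [← h8]
    exact h9
  have hfps : HasFPowerSeriesOnBall h p 0 (ENNReal.ofReal (R ^ m)) := by
    refine ⟨hrad, by simp [ENNReal.ofReal_pos, hRm], ?_⟩
    intro y hy
    rw [Metric.emetric_ball] at hy
    have h7 := (keyh y hy).1
    rw [zero_add]
    have h6 : (fun n => p n fun _ => y) = fun n => c n * y ^ n := by
      funext n
      rw [hpdef, FormalMultilinearSeries.ofScalars_apply_eq, smul_eq_mul]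
    rw [h6]
    exact h7
  have hdiff : DifferentiableOn ℂ h (ball (0:ℂ) (R ^ m)) := by
    have := hfps.differentiableOn
    rwa [Metric.emetric_ball] at this
  have hderiv : deriv h 0 = a m := by
    have := hfps.hasFPowerSeriesAt.deriv
    rw [this]
    show p 1 (1 : Fin 1 → ℂ) = a m
    have h5 : p 1 (fun _ => (1:ℂ)) = c 1 • (1:ℂ) ^ 1 :=
      FormalMultilinearSeries.ofScalars_apply_eq (E := ℂ) (c := c) (1:ℂ) 1
    rw [show (1 : Fin 1 → ℂ) = fun _ => (1:ℂ) from rfl, h5]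
    simp [hcdef]
  have hh0 : h 0 = f 0 := by
    have h1 := (keyh 0 (mem_ball_self hRm)).1
    have h2 : HasSum (fun k => c k * (0:ℂ) ^ k) (c 0) := by
      have := hasSum_single (f := fun k => c k * (0:ℂ) ^ k) 0
        (fun b hb => by simp [pow_eq_zero_iff hb])
      simpa using this
    have h3 : h 0 = c 0 := h1.unique h2
    have h4 : a 0 = f 0 := by
      have h5 := ha 0 h0mem
      have h6 : HasSum (fun n => a n * (0:ℂ) ^ n) (a 0) := by
        have := hasSum_single (f := fun n => a n * (0:ℂ) ^ n) 0
          (fun b hb => by simp [pow_eq_zero_iff hb])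
        simpa using this
      exact (h6.unique h5)
    rw [h3]
    simpa [hcdef] using h4
  -- Schwarz-Pick with M + ε
  have hεbound : ∀ ε : ℝ, 0 < ε → ‖a m‖ * R ^ m ≤ 2 * (M - ‖f 0‖) + 2 * ε := by
    intro ε hε
    have hMε : (0:ℝ) < M + ε := by linarith
    have hb : ∀ z ∈ ball (0:ℂ) (R ^ m), ‖h z‖ < M + ε := by
      intro z hz
      have := (keyh z hz).2
      linarith
    have := aux_schwarz_pick hRm hMε hdiff hb
    rw [hderiv, hh0] at this
    set t := ‖f 0‖
    have ht : 0 ≤ t := norm_nonneg _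
    -- ‖a m‖ * ((M+ε) * R^m) ≤ (M+ε)^2 - t^2 ≤ (M+ε-t) * (2*(M+ε))
    have h2 : (M + ε) ^ 2 - t ^ 2 ≤ (M + ε - t) * (2 * (M + ε)) := by nlinarith
    have h3 : ‖a m‖ * ((M + ε) * R ^ m) ≤ (M + ε - t) * (2 * (M + ε)) := by linarith
    nlinarith [norm_nonneg (a m), hRm]
  have := le_of_forall_pos_le_add (a := ‖a m‖ * R ^ m) (b := 2 * (M - ‖f 0‖))
    (fun ε hε => by have := hεbound (ε / 2) (by linarith); linarith)
  exact this

/-- **Power-series von Neumann inequality for operators of norm at most `R/3`.**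
If `X` is a complex Banach space, `T` a bounded operator on `X` with `‖T‖ ≤ R / 3`, and `f`
a bounded holomorphic function on the open disk `D_R` with power series `f z = ∑ aₙ zⁿ`, then
`∑ aₙ Tⁿ` converges absolutely in operator norm and `‖∑ aₙ Tⁿ‖ ≤ sup_{w ∈ D_R} |f w|`. -/
theorem stmt_5 (X : Type*) [NormedAddCommGroup X] [NormedSpace ℂ X] [CompleteSpace X]
    (R : ℝ) (hR : 0 < R) (T : X →L[ℂ] X) (hT : ‖T‖ ≤ R / 3)
    (f : ℂ → ℂ) (a : ℕ → ℂ)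
    (hf : DifferentiableOn ℂ f (ball (0 : ℂ) R))
    (hbd : BddAbove ((fun w => ‖f w‖) '' ball (0 : ℂ) R))
    (ha : ∀ z ∈ ball (0 : ℂ) R, HasSum (fun n => a n * z ^ n) (f z)) :
    Summable (fun n => ‖a n • T ^ n‖) ∧
      ‖∑' n, a n • T ^ n‖ ≤ sSup ((fun w => ‖f w‖) '' ball (0 : ℂ) R) := by
  set M : ℝ := sSup ((fun w => ‖f w‖) '' ball (0 : ℂ) R) with hMdef
  have hM : ∀ z ∈ ball (0:ℂ) R, ‖f z‖ ≤ M :=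
    fun z hz => le_csSup hbd ⟨z, hz, rfl⟩
  have h0mem : (0:ℂ) ∈ ball (0:ℂ) R := mem_ball_self hR
  have hf0M : ‖f 0‖ ≤ M := hM 0 h0mem
  set t : ℝ := ‖f 0‖ with htdef
  have ht0 : 0 ≤ t := norm_nonneg _
  have hM0 : 0 ≤ M := le_trans ht0 hf0M
  have hcb : ∀ m : ℕ, 1 ≤ m → ‖a m‖ * R ^ m ≤ 2 * (M - t) :=
    fun m hm => aux_coeff_bound hR ha hM m hm
  have ha0 : a 0 = f 0 := by
    have h5 := ha 0 h0mem
    have h6 : HasSum (fun n => a n * (0:ℂ) ^ n) (a 0) := by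
      have := hasSum_single (f := fun n => a n * (0:ℂ) ^ n) 0
        (fun b hb => by simp [pow_eq_zero_iff hb])
      simpa using this
    exact h6.unique h5
  have hR3 : (0:ℝ) ≤ R / 3 := by linarith
  -- bound each term
  set b : ℕ → ℝ := fun n => ‖a n‖ * (R / 3) ^ n with hbdef
  have hTn : ∀ n, ‖a n • T ^ n‖ ≤ b n := by
    intro n
    show ‖a n • T ^ n‖ ≤ ‖a n‖ * (R / 3) ^ n
    rw [norm_smul (a n) (T ^ n)]
    apply mul_le_mul_of_nonneg_left _ (norm_nonneg _)
    rcases Nat.eq_zero_or_pos n with hn | hn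
    · subst hn
      rw [pow_zero, pow_zero]; exact ContinuousLinearMap.norm_id_le
    · calc ‖T ^ n‖ ≤ ‖T‖ ^ n := norm_pow_le' T hn
        _ ≤ (R / 3) ^ n := pow_le_pow_left₀ (norm_nonneg T) hT n
  have hbn : ∀ n : ℕ, 1 ≤ n → b n ≤ (2 * (M - t)) * (1 / 3 : ℝ) ^ n := by
    intro n hn
    show ‖a n‖ * (R / 3) ^ n ≤ 2 * (M - t) * (1 / 3 : ℝ) ^ n
    have h2 : (R / 3 : ℝ) ^ n = R ^ n * (1 / 3 : ℝ) ^ n := by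
      rw [← mul_pow]; ring_nf
    rw [h2, ← mul_assoc]
    exact mul_le_mul_of_nonneg_right (hcb n hn) (by positivity)
  have hgeo : Summable (fun n : ℕ => (2 * (M - t)) * (1 / 3 : ℝ) ^ n) :=
    (summable_geometric_of_lt_one (by norm_num) (by norm_num)).mul_left _
  have hgeo' : Summable (fun n : ℕ => (2 * (M - t)) * (1 / 3 : ℝ) ^ (n + 1)) := by
    have hx : (fun n : ℕ => (2 * (M - t)) * (1 / 3 : ℝ) ^ (n + 1))
        = fun n : ℕ => ((2 * (M - t)) * (1 / 3 : ℝ)) * (1 / 3 : ℝ) ^ n := by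
      funext n; ring
    rw [hx]
    exact (summable_geometric_of_lt_one (by norm_num) (by norm_num)).mul_left _
  have hbnonneg : ∀ n, 0 ≤ b n := fun n => by positivity
  have hbsum : Summable b := by
    have hshift : Summable (fun n => b (n + 1)) :=
      Summable.of_nonneg_of_le (fun n => hbnonneg _) (fun n => hbn (n + 1) (by omega))
        hgeo'
    exact (summable_nat_add_iff 1).mp hshift
  have hsummable : Summable (fun n => ‖a n • T ^ n‖) :=
    Summable.of_nonneg_of_le (fun n => norm_nonneg _) hTn hbsum
  refine ⟨hsummable, ?_⟩
  have htsum_b : ∑' n, b n ≤ M := by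
    rw [Summable.tsum_eq_zero_add hbsum]
    have hb0 : b 0 = t := by
      show ‖a 0‖ * (R / 3) ^ 0 = t
      rw [pow_zero, mul_one, ha0]
    have htail : ∑' n, b (n + 1) ≤ M - t := by
      have h3 : ∑' n : ℕ, (2 * (M - t)) * (1/3:ℝ) ^ (n+1) = M - t := by
        have h4 : ∀ n : ℕ, (2 * (M - t)) * (1/3:ℝ) ^ (n+1)
            = ((2 * (M - t)) * (1/3)) * (1/3:ℝ) ^ n := by
          intro n; ring
        rw [funext h4, tsum_mul_left, tsum_geometric_of_lt_one (by norm_num) (by norm_num)]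
        norm_num
        ring
      rw [← h3]
      apply Summable.tsum_le_tsum (fun n => hbn (n+1) (by omega))
      · exact (summable_nat_add_iff 1).mpr hbsum
      · exact hgeo'
    linarith [hb0, htail]
  calc ‖∑' n, a n • T ^ n‖ ≤ ∑' n, ‖a n • T ^ n‖ := norm_tsum_le_tsum_norm hsummable
    _ ≤ ∑' n, b n := Summable.tsum_le_tsum hTn hsummable hbsum
    _ ≤ M := htsum_b
end

section
/- Failure of the von Neumann inequality above the Bohr radius: Let R > 0 and let r satisfy R/3 < r < R. Then there exists a bounded holomorphic function f on the open disk D_R = {z ∈ ℂ : |z| < R}, with power series expansion f(z) = ∑_{n=0}^∞ a_n z^n, such that the operator r·M_z on ℓ¹(ℂ) (which has operator norm r) satisfies ‖∑_{n=0}^∞ a_n r^n M_z^n‖ = ∑_{n=0}^∞ |a_n| r^n > sup_{w ∈ D_R} |f(w)|, where the operator series converges absolutely in operator norm. -/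
open Metric
open scoped ENNReal

section Aux

private noncomputable abbrev L1 := lp (fun _ : ℕ => ℂ) 1

lemma l1_norm (f : L1) : ‖f‖ = ∑' n, ‖f n‖ := by
  rw [lp.norm_eq_tsum_rpow (by norm_num) f]
  simp

lemma l1_summable (f : L1) : Summable fun n => ‖f n‖ := by
  have := lp.memℓp f
  rw [memℓp_gen_iff (p := 1) (by norm_num)] at this
  simpa using this

lemma shift_norm (Mz : L1 →L[ℂ] L1)
    (hMz : ∀ x : L1, Mz x 0 = 0 ∧ ∀ n : ℕ, Mz x (n + 1) = x n) (x : L1) :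
    ‖Mz x‖ = ‖x‖ := by
  rw [l1_norm, l1_norm]
  rw [Summable.tsum_eq_zero_add (l1_summable (Mz x))]
  simp [(hMz x).1, (hMz x).2]

lemma shift_pow_single (Mz : L1 →L[ℂ] L1)
    (hMz : ∀ x : L1, Mz x 0 = 0 ∧ ∀ n : ℕ, Mz x (n + 1) = x n) (k : ℕ) :
    (Mz ^ k) (lp.single 1 0 (1:ℂ)) = lp.single 1 k (1:ℂ) := by
  induction k with
  | zero => simp
  | succ k ih =>
    rw [pow_succ']
    rw [ContinuousLinearMap.mul_apply, ih]
    apply lp.ext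
    funext n
    match n with
    | 0 =>
      rw [(hMz _).1, lp.single_apply_ne 1 (k+1) _ (by omega)]
    | (m+1) =>
      rw [(hMz _).2]
      by_cases h : m = k
      · subst h; rw [lp.single_apply_self, lp.single_apply_self]
      · rw [lp.single_apply_ne 1 k _ h, lp.single_apply_ne 1 (k+1) _ (by omega)]


lemma shift_pow_norm (Mz : L1 →L[ℂ] L1)
    (hMz : ∀ x : L1, Mz x 0 = 0 ∧ ∀ n : ℕ, Mz x (n + 1) = x n) (k : ℕ) (x : L1) :
    ‖(Mz ^ k) x‖ = ‖x‖ := by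
  induction k with
  | zero => simp
  | succ k ih =>
    rw [pow_succ', ContinuousLinearMap.mul_apply, shift_norm Mz hMz, ih]

lemma norm_e0 : ‖(lp.single 1 0 (1:ℂ) : L1)‖ = 1 := by
  have := lp.norm_single (p := (1:ℝ≥0∞)) (E := fun _ : ℕ => ℂ) (by norm_num) 0 (1:ℂ)
  simpa using this


lemma key (Mz : L1 →L[ℂ] L1)
    (hMz : ∀ x : L1, Mz x 0 = 0 ∧ ∀ n : ℕ, Mz x (n + 1) = x n)
    (hpow : ∀ k : ℕ, (Mz ^ k) (lp.single 1 0 (1:ℂ)) = lp.single 1 k (1:ℂ))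
    (hpn : ∀ (k : ℕ) (x : L1), ‖(Mz ^ k) x‖ = ‖x‖)
    (he0 : ‖(lp.single 1 0 (1:ℂ) : L1)‖ = 1)
    (b : ℕ → ℂ) (hb : Summable fun n => ‖b n‖) :
    Summable (fun n => ‖(b n) • Mz ^ n‖) ∧ ‖∑' n, b n • Mz ^ n‖ = ∑' n, ‖b n‖ := by
  have hnorm_pow : ∀ k : ℕ, ‖Mz ^ k‖ ≤ 1 := fun k =>
    ContinuousLinearMap.opNorm_le_bound _ zero_le_one (fun x => by rw [hpn, one_mul])
  have hterm : ∀ n, ‖(b n) • Mz ^ n‖ ≤ ‖b n‖ := by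
    intro n
    rw [norm_smul (b n) (Mz ^ n)]
    calc ‖b n‖ * ‖Mz ^ n‖ ≤ ‖b n‖ * 1 :=
          mul_le_mul_of_nonneg_left (hnorm_pow n) (norm_nonneg _)
      _ = ‖b n‖ := mul_one _
  have hsn : Summable (fun n => ‖(b n) • Mz ^ n‖) :=
    Summable.of_nonneg_of_le (fun n => norm_nonneg _) hterm hb
  refine ⟨hsn, ?_⟩
  have hs : Summable (fun n => b n • Mz ^ n) := hsn.of_norm
  have hub : ‖∑' n, b n • Mz ^ n‖ ≤ ∑' n, ‖b n‖ :=
    le_trans (norm_tsum_le_tsum_norm hsn) (Summable.tsum_le_tsum hterm hsn hb)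
  -- lower bound
  set e0 : L1 := lp.single 1 0 (1:ℂ) with he0def
  set v : L1 := ⟨fun n => b n, memℓp_gen (by simpa using hb)⟩ with hv
  have hvcoord : ∀ n, v n = b n := fun n => rfl
  have happ : HasSum (fun n => (b n • Mz ^ n) e0) ((∑' n, b n • Mz ^ n) e0) :=
    hs.hasSum.mapL (ContinuousLinearMap.apply ℂ L1 e0)
  have hterm2 : (fun n => (b n • Mz ^ n) e0) = fun n => lp.single 1 n (v n) := by
    funext n
    rw [ContinuousLinearMap.smul_apply, hpow n, hvcoord]
    rw [← lp.single_smul]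
    norm_num
  rw [hterm2] at happ
  have h2 : HasSum (fun n : ℕ => lp.single 1 n (v n)) v :=
    lp.hasSum_single (by norm_num) v
  have hTv : (∑' n, b n • Mz ^ n) e0 = v := happ.unique h2
  have hnv : ‖v‖ = ∑' n, ‖b n‖ := by
    rw [l1_norm]
  have hlb : ∑' n, ‖b n‖ ≤ ‖∑' n, b n • Mz ^ n‖ := by
    calc ∑' n, ‖b n‖ = ‖v‖ := hnv.symm
      _ = ‖(∑' n, b n • Mz ^ n) e0‖ := by rw [hTv]
      _ ≤ ‖∑' n, b n • Mz ^ n‖ * ‖e0‖ := ContinuousLinearMap.le_opNorm _ _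
      _ = ‖∑' n, b n • Mz ^ n‖ := by rw [he0, mul_one]
  linarith


lemma analytic_part (R r : ℝ) (hR : 0 < R) (hr₁ : R / 3 < r) (hr₂ : r < R) :
    ∃ (f : ℂ → ℂ) (a : ℕ → ℂ),
      DifferentiableOn ℂ f (ball (0 : ℂ) R) ∧
      BddAbove ((fun w => ‖f w‖) '' ball (0 : ℂ) R) ∧
      (∀ z ∈ ball (0 : ℂ) R, HasSum (fun n => a n * z ^ n) (f z)) ∧
      Summable (fun n => ‖a n‖ * r ^ n) ∧
      sSup ((fun w => ‖f w‖) '' ball (0 : ℂ) R) < ∑' n, ‖a n‖ * r ^ n := by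
  have hr0 : 0 < r := lt_trans (by positivity) hr₁
  set ρ : ℝ := r / R with hρ
  have hρ0 : 0 < ρ := by positivity
  have hρ1 : 1/3 < ρ := by rw [hρ, lt_div_iff₀ hR]; linarith
  have hρ2 : ρ < 1 := by rw [hρ, div_lt_one hR]; exact hr₂
  obtain ⟨t, ht0, ht1, hkey⟩ : ∃ t : ℝ, 0 < t ∧ t < 1 ∧ 1 < ρ * (1 + 2*t) := by
    refine ⟨1 - (3*ρ-1)/4, by linarith, by linarith, ?_⟩
    nlinarith [mul_pos (by linarith : (0:ℝ) < 3*ρ-1) (by linarith : (0:ℝ) < 1 - ρ/2)]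
  have hRC : (R:ℂ) ≠ 0 := by exact_mod_cast hR.ne'
  have hns : ∀ u : ℂ, ‖u‖^2 = u.re^2 + u.im^2 := fun u => by
    rw [Complex.sq_norm, Complex.normSq_apply]; ring
  set f : ℂ → ℂ := fun z => ((t:ℂ) - z/R) / (1 - t * (z/R)) with hf
  set a : ℕ → ℂ := fun n => Nat.casesOn n (t:ℂ) (fun m => -(1-(t:ℂ)^2) * t^m / R^(m+1)) with ha
  have hwlt : ∀ z ∈ ball (0:ℂ) R, ‖z / (R:ℂ)‖ < 1 := by
    intro z hz
    rw [mem_ball_zero_iff] at hz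
    rw [norm_div, Complex.norm_real, Real.norm_eq_abs, abs_of_pos hR, div_lt_one hR]
    exact hz
  have hden : ∀ z ∈ ball (0:ℂ) R, (1 : ℂ) - t * (z/R) ≠ 0 := by
    intro z hz h
    have h1 : (1:ℂ) = t * (z/R) := by
      have := sub_eq_zero.mp h; exact this.symm ▸ rfl
    have h2 : (1:ℝ) = ‖(t:ℂ) * (z/R)‖ := by rw [← h1]; simp
    rw [norm_mul, Complex.norm_real, Real.norm_eq_abs, abs_of_pos ht0] at h2
    nlinarith [hwlt z hz, norm_nonneg (z/(R:ℂ))]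
  have hbound : ∀ z ∈ ball (0:ℂ) R, ‖f z‖ ≤ 1 := by
    intro z hz
    have hw1 : ‖z / (R:ℂ)‖ < 1 := hwlt z hz
    set w := z / (R:ℂ) with hw
    rw [hf]
    simp only [← hw]
    rw [norm_div, div_le_one_iff]
    left
    refine ⟨norm_pos_iff.mpr (hden z hz), ?_⟩
    have hw2 : w.re^2 + w.im^2 < 1 := by
      have h3 := hns w
      nlinarith [norm_nonneg w]
    have hsq : ‖(t:ℂ) - w‖^2 ≤ ‖1 - (t:ℂ)*w‖^2 := by
      rw [hns, hns]
      simp only [Complex.sub_re, Complex.sub_im, Complex.mul_re,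
        Complex.mul_im, Complex.ofReal_re, Complex.ofReal_im, Complex.one_re, Complex.one_im]
      nlinarith [mul_nonneg (by nlinarith : (0:ℝ) ≤ 1 - t^2) (by nlinarith : (0:ℝ) ≤ 1 - w.re^2 - w.im^2)]
    nlinarith [norm_nonneg ((t:ℂ) - w), norm_nonneg (1 - (t:ℂ)*w)]
  have hdiff : DifferentiableOn ℂ f (ball (0:ℂ) R) := by
    apply DifferentiableOn.div
    · exact (differentiableOn_const _).sub (differentiable_id.div_const _).differentiableOn
    · exact (differentiableOn_const _).sub
        ((differentiable_id.div_const _).const_mul _).differentiableOn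
    · exact hden
  have hbdd : BddAbove ((fun w => ‖f w‖) '' ball (0 : ℂ) R) := by
    refine ⟨1, fun y hy => ?_⟩
    obtain ⟨z, hz, rfl⟩ := hy
    exact hbound z hz
  have hhs : ∀ z ∈ ball (0 : ℂ) R, HasSum (fun n => a n * z ^ n) (f z) := by
    intro z hz
    have hw1 : ‖z / (R:ℂ)‖ < 1 := hwlt z hz
    have hd := hden z hz
    set w := z / (R:ℂ) with hw
    have htw : ‖(t:ℂ) * w‖ < 1 := by
      rw [norm_mul, Complex.norm_real, Real.norm_eq_abs, abs_of_pos ht0]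
      nlinarith [norm_nonneg w]
    refine (hasSum_nat_add_iff' 1).mp ?_
    have hgeom := (hasSum_geometric_of_norm_lt_one htw).mul_left (-(1-(t:ℂ)^2) * w)
    have hRpow : ∀ k : ℕ, ((R:ℂ))^k ≠ 0 := fun k => pow_ne_zero k hRC
    have hfun : (fun n : ℕ => a (n+1) * z^(n+1)) =
        fun n : ℕ => -(1-(t:ℂ)^2) * w * ((t:ℂ)*w)^n := by
      funext n
      have h1 : a (n+1) = -(1-(t:ℂ)^2) * t^n / R^(n+1) := rfl
      rw [h1, hw, mul_pow, div_pow]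
      rw [div_mul_eq_mul_div, div_eq_iff (hRpow (n+1))]
      field_simp
      ring
    have hval : f z - (t:ℂ) = -(1-(t:ℂ)^2) * w * (1 - (t:ℂ)*w)⁻¹ := by
      have h2 : f z = ((t:ℂ) - w)/(1 - (t:ℂ)*w) := rfl
      rw [h2, ← div_eq_mul_inv, div_sub' hd, div_eq_div_iff hd hd]
      ring
    rw [hfun, Finset.sum_range_one]
    have ha0 : a 0 * z ^ 0 = (t:ℂ) := by
      have : a 0 = (t:ℂ) := rfl
      rw [this, pow_zero, mul_one]
    rw [ha0, hval]
    exact hgeom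
  -- the coefficient sums
  set g : ℕ → ℝ := fun n => ‖a n‖ * r ^ n with hg
  have hg0 : g 0 = t := by
    have ha0 : a 0 = (t:ℂ) := rfl
    show ‖a 0‖ * r ^ 0 = t
    rw [ha0, pow_zero, mul_one, Complex.norm_real, Real.norm_eq_abs, abs_of_pos ht0]
  have htρ : t * ρ < 1 := by nlinarith
  have htρ0 : 0 ≤ t * ρ := by positivity
  have hgs : ∀ m : ℕ, g (m+1) = ((1-t^2)*ρ) * (t*ρ)^m := by
    intro m
    have hc : a (m+1) = (((-(1-t^2)*t^m/R^(m+1)) : ℝ) : ℂ) := by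
      show -(1-(t:ℂ)^2) * t^m / R^(m+1) = _
      push_cast
      ring
    have hn : ‖a (m+1)‖ = (1-t^2)*t^m/R^(m+1) := by
      rw [hc, Complex.norm_real, Real.norm_eq_abs, neg_mul, neg_div, abs_neg,
        abs_of_nonneg (div_nonneg (mul_nonneg (by nlinarith) (by positivity)) (by positivity))]
    rw [hg]
    show ‖a (m+1)‖ * r^(m+1) = _
    rw [hn, hρ, mul_pow, div_pow]
    field_simp
    ring
  have hgeo2 : Summable (fun m => ((1-t^2)*ρ) * (t*ρ)^m) :=
    (summable_geometric_of_lt_one htρ0 htρ).mul_left _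
  have hshift : (fun n => g (n+1)) = fun m => ((1-t^2)*ρ) * (t*ρ)^m := funext hgs
  have hsumg : Summable g := by
    rw [← summable_nat_add_iff 1, hshift]
    exact hgeo2
  have htsum : ∑' n, g n = t + ((1-t^2)*ρ) * (1 - t*ρ)⁻¹ := by
    rw [Summable.tsum_eq_zero_add hsumg, hg0, hshift, tsum_mul_left,
      tsum_geometric_of_lt_one htρ0 htρ]
  have hone : 1 < ∑' n, g n := by
    rw [htsum]
    have h1tρ : 0 < 1 - t*ρ := by linarith
    have h2 : 1 - t < ((1-t^2)*ρ) * (1 - t*ρ)⁻¹ := by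
      rw [← div_eq_mul_inv, lt_div_iff₀ h1tρ]
      nlinarith
    linarith
  refine ⟨f, a, hdiff, hbdd, hhs, hsumg, ?_⟩
  have hsup : sSup ((fun w => ‖f w‖) '' ball (0 : ℂ) R) ≤ 1 :=
    Real.sSup_le (fun y hy => by obtain ⟨z, hz, rfl⟩ := hy; exact hbound z hz) zero_le_one
  exact lt_of_le_of_lt hsup hone
end Aux

/-- **Failure of the von Neumann inequality above the Bohr radius.** Let `R > 0` and
`R/3 < r < R`, and let `M_z` be the forward shift on `ℓ¹(ℂ)`. Then there is a bounded
holomorphic function `f` on `D_R`, with power series `f z = ∑ aₙ zⁿ`, such that the operator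
`r • M_z` (of norm `r`) satisfies `‖∑ aₙ rⁿ M_zⁿ‖ = ∑ |aₙ| rⁿ > sup_{w ∈ D_R} |f w|`, the
operator series converging absolutely in operator norm. -/
theorem stmt_9 (R r : ℝ) (hR : 0 < R) (hr₁ : R / 3 < r) (hr₂ : r < R)
    (Mz : lp (fun _ : ℕ => ℂ) 1 →L[ℂ] lp (fun _ : ℕ => ℂ) 1)
    (hMz : ∀ x : lp (fun _ : ℕ => ℂ) 1,
      Mz x 0 = 0 ∧ ∀ n : ℕ, Mz x (n + 1) = x n) :
    ‖(r : ℂ) • Mz‖ = r ∧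
    ∃ (f : ℂ → ℂ) (a : ℕ → ℂ),
      DifferentiableOn ℂ f (ball (0 : ℂ) R) ∧
      BddAbove ((fun w => ‖f w‖) '' ball (0 : ℂ) R) ∧
      (∀ z ∈ ball (0 : ℂ) R, HasSum (fun n => a n * z ^ n) (f z)) ∧
      Summable (fun n => ‖(a n * (r : ℂ) ^ n) • Mz ^ n‖) ∧
      ‖∑' n, (a n * (r : ℂ) ^ n) • Mz ^ n‖ = ∑' n, ‖a n‖ * r ^ n ∧
      sSup ((fun w => ‖f w‖) '' ball (0 : ℂ) R) < ∑' n, ‖a n‖ * r ^ n := by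
  have hr0 : 0 < r := lt_trans (by positivity) hr₁
  have hMznorm : ‖Mz‖ = 1 := by
    apply le_antisymm
    · exact ContinuousLinearMap.opNorm_le_bound _ zero_le_one
        (fun x => by rw [shift_norm Mz hMz, one_mul])
    · have h1 : ‖Mz (lp.single 1 0 (1:ℂ))‖ = 1 := by rw [shift_norm Mz hMz, norm_e0]
      have h2 := ContinuousLinearMap.le_opNorm Mz (lp.single 1 0 (1:ℂ))
      rw [h1, norm_e0, mul_one] at h2
      exact h2
  constructor
  · rw [norm_smul ((r:ℂ)) Mz, hMznorm, mul_one, Complex.norm_real, Real.norm_eq_abs, abs_of_pos hr0]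
  obtain ⟨f, a, hdiff, hbdd, hhs, hsumg, hlt⟩ := analytic_part R r hR hr₁ hr₂
  have hbn : ∀ n : ℕ, ‖a n * (r:ℂ)^n‖ = ‖a n‖ * r^n := by
    intro n
    rw [norm_mul, norm_pow, Complex.norm_real, Real.norm_eq_abs, abs_of_pos hr0]
  have hb : Summable fun n => ‖a n * (r:ℂ)^n‖ := by
    simpa only [hbn] using hsumg
  obtain ⟨hks, hkn⟩ := key Mz hMz (shift_pow_single Mz hMz) (shift_pow_norm Mz hMz)
    norm_e0 (fun n => a n * (r:ℂ)^n) hb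
  refine ⟨f, a, hdiff, hbdd, hhs, hks, ?_, hlt⟩
  rw [hkn]
  exact tsum_congr hbn
end

section
/- Let X be a complex Banach space and let M̂_z be the backward shift operator on ℓ²(X), defined by M̂_z(a_0, a_1, a_2, …) = (a_1, a_2, a_3, …). If the closed unit disk D̄ = {z ∈ ℂ : |z| ≤ 1} is a spectral set for M̂_z — i.e. σ(M̂_z) ⊆ D̄ and ‖p(M̂_z) q(M̂_z)^{−1}‖ ≤ sup_{|z| ≤ 1} |p(z)/q(z)| for all complex polynomials p, q with q having no zeros in D̄ — then X satisfies the parallelogram law: ‖x + y‖² + ‖x − y‖² = 2(‖x‖² + ‖y‖²) for all x, y ∈ X; equivalently, X is a Hilbert space. -/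
open Polynomial Metric
open scoped ENNReal




namespace Stmt12

variable {X : Type} [NormedAddCommGroup X] [NormedSpace ℂ X] [CompleteSpace X]

lemma two_toReal : ((2:ℝ≥0∞)).toReal = 2 := by norm_num

lemma rpow_two_eq (x : ℝ) : x ^ ((2:ℝ≥0∞)).toReal = x ^ (2:ℕ) := by
  rw [two_toReal, show ((2:ℝ)) = ((2:ℕ):ℝ) by norm_num, Real.rpow_natCast]

lemma memlp2_of_bound (f : ℕ → X) (c r : ℝ) (hr0 : 0 ≤ r) (hr : r < 1)
    (h : ∀ n, ‖f n‖ ^ (2:ℕ) ≤ c * r ^ n) : Memℓp f (2:ℝ≥0∞) := by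
  apply memℓp_gen
  have heq : (fun n => ‖f n‖ ^ ((2:ℝ≥0∞)).toReal) = fun n => ‖f n‖ ^ (2:ℕ) := by
    funext n; exact rpow_two_eq _
  rw [heq]
  exact Summable.of_nonneg_of_le (fun n => by positivity) h
    ((summable_geometric_of_lt_one hr0 hr).mul_left c)

lemma norm_sq_eq (F : lp (fun _ : ℕ => X) 2) : ‖F‖ ^ (2:ℕ) = ∑' n, ‖F n‖ ^ (2:ℕ) := by
  have h := lp.norm_rpow_eq_tsum (p := 2) (by norm_num) F
  rw [rpow_two_eq] at h
  rw [h]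
  congr 1
  funext n
  exact rpow_two_eq _

lemma summable_sq (F : lp (fun _ : ℕ => X) 2) : Summable fun n => ‖F n‖ ^ (2:ℕ) := by
  have h := (memℓp_gen_iff (p := 2) (by norm_num)).1 (lp.memℓp F)
  have heq : (fun n => ‖F n‖ ^ ((2:ℝ≥0∞)).toReal) = fun n => ‖F n‖ ^ (2:ℕ) := by
    funext n; exact rpow_two_eq _
  rwa [heq] at h

lemma norm_sq_split (F : lp (fun _ : ℕ => X) 2) :
    ‖F‖ ^ (2:ℕ) = ‖F 0‖ ^ (2:ℕ) + ‖F 1‖ ^ (2:ℕ) + ∑' k, ‖F (k+2)‖ ^ (2:ℕ) := by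
  rw [norm_sq_eq]
  have h1 := summable_sq F
  rw [Summable.tsum_eq_zero_add h1, Summable.tsum_eq_zero_add ((summable_nat_add_iff 1).2 h1)]
  have : ∀ k : ℕ, k + 1 + 1 = k + 2 := fun k => rfl
  simp only [this, zero_add]
  ring

end Stmt12

namespace Stmt12

variable {X : Type} [NormedAddCommGroup X] [NormedSpace ℂ X] [CompleteSpace X]

def gfun (u z : X) (σ : ℂ) : ℕ → X
  | 0 => 0
  | 1 => u
  | (k+2) => σ^k • z

def afun (u z : X) (σ : ℂ) : ℕ → X
  | 0 => -(σ • u)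
  | 1 => u - σ • z
  | (k+2) => ((1:ℂ) - σ^2) • σ^k • z

def bfun (u z : X) (σ : ℂ) : ℕ → X
  | 0 => u
  | 1 => z - σ • u
  | (_+2) => 0

lemma tail_sum (c : ℂ) (z : X) (s : ℝ) (h0 : 0 ≤ s) (h1 : s < 1) :
    ∑' k : ℕ, ‖c • ((s:ℂ))^k • z‖^(2:ℕ) = ‖c‖^2 * ‖z‖^2 * (1 - s^2)⁻¹ := by
  have hterm : ∀ k : ℕ, ‖c • ((s:ℂ))^k • z‖^(2:ℕ) = (‖c‖^2 * ‖z‖^2) * (s^2)^k := by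
    intro k
    rw [norm_smul, norm_smul, norm_pow]
    have : ‖((s:ℝ):ℂ)‖ = s := by
      rw [Complex.norm_real, Real.norm_eq_abs, abs_of_nonneg h0]
    rw [this, mul_pow, mul_pow,
      show ((s:ℝ)^2)^k = (s^k)^2 from by rw [← pow_mul, ← pow_mul, mul_comm]]
    ring
  rw [tsum_congr hterm, tsum_mul_left, tsum_geometric_of_lt_one (by positivity) (by nlinarith)]

set_option maxHeartbeats 2000000 in
set_option synthInstance.maxHeartbeats 400000 in
lemma key (Mz : lp (fun _ : ℕ => X) 2 →L[ℂ] lp (fun _ : ℕ => X) 2)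
    (hMz : ∀ (x : lp (fun _ : ℕ => X) 2) (n : ℕ), Mz x n = x (n + 1))
    (hvN : ∀ p q : ℂ[X], (∀ w ∈ closedBall (0 : ℂ) 1, q.eval w ≠ 0) →
      IsUnit (aeval Mz q) ∧
      ‖aeval Mz p * Ring.inverse (aeval Mz q)‖ ≤
        sSup ((fun w => ‖p.eval w / q.eval w‖) '' closedBall (0 : ℂ) 1))
    (s : ℝ) (h0 : 0 < s) (h1 : s < 1) (u z : X) :
    (1 - s^2) * ‖u‖^2 + ‖z - (s:ℂ) • u‖^2 ≤ ‖u - (s:ℂ) • z‖^2 + (1 - s^2) * ‖z‖^2 := by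
  have hσnorm : ‖((s:ℝ):ℂ)‖ = s := by
    rw [Complex.norm_real, Real.norm_eq_abs, abs_of_nonneg h0.le]
  set σ : ℂ := (s:ℂ) with hσ
  -- the polynomials
  have hQne : ∀ w ∈ closedBall (0 : ℂ) 1, ((1 : ℂ[X]) - C σ * Polynomial.X).eval w ≠ 0 := by
    intro w hw hej
    simp only [eval_sub, eval_one, eval_mul, eval_C, eval_X] at hej
    have h2 : σ * w = 1 := by linear_combination -hej
    have h3 : ‖σ * w‖ = 1 := by rw [h2, norm_one]
    rw [norm_mul, hσnorm] at h3
    have hw1 : ‖w‖ ≤ 1 := by simpa [Complex.dist_eq] using mem_closedBall_zero_iff.1 hw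
    nlinarith [norm_nonneg w]
  obtain ⟨hU, hN⟩ := hvN (Polynomial.X - C σ) (1 - C σ * Polynomial.X) hQne
  -- sup bound
  have hsup : sSup ((fun w => ‖(Polynomial.X - C σ).eval w / ((1:ℂ[X]) - C σ * Polynomial.X).eval w‖) ''
      closedBall (0 : ℂ) 1) ≤ 1 := by
    apply Real.sSup_le _ zero_le_one
    rintro y ⟨w, hw, rfl⟩
    simp only [eval_sub, eval_one, eval_mul, eval_C, eval_X]
    rw [norm_div]
    have hw1 : ‖w‖ ≤ 1 := by simpa using mem_closedBall_zero_iff.1 hw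
    have hne : (1:ℂ) - σ * w ≠ 0 := by
      have := hQne w hw
      simpa only [eval_sub, eval_one, eval_mul, eval_C, eval_X] using this
    have hpos : 0 < ‖(1:ℂ) - σ * w‖ := norm_pos_iff.2 hne
    rw [div_le_one hpos]
    -- ‖w - σ‖ ≤ ‖1 - σ w‖
    have hsq : ‖w - σ‖^2 ≤ ‖(1:ℂ) - σ * w‖^2 := by
      have e1 : ‖w - σ‖^2 = (w.re - s)^2 + w.im^2 := by
        rw [Complex.sq_norm, Complex.normSq_apply]
        simp only [hσ, Complex.sub_re, Complex.sub_im, Complex.ofReal_re, Complex.ofReal_im]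
        ring
      have e2 : ‖(1:ℂ) - σ * w‖^2 = (1 - s * w.re)^2 + (s * w.im)^2 := by
        rw [Complex.sq_norm, Complex.normSq_apply]
        simp only [hσ, Complex.sub_re, Complex.sub_im, Complex.mul_re, Complex.mul_im,
          Complex.ofReal_re, Complex.ofReal_im, Complex.one_re, Complex.one_im]
        ring
      rw [e1, e2]
      have hw2 : w.re^2 + w.im^2 ≤ 1 := by
        have := Complex.sq_norm w
        have h4 : ‖w‖ ≤ 1 := hw1
        nlinarith [Complex.normSq_apply w, norm_nonneg w]
      have f1 : (0:ℝ) ≤ 1 - s^2 := by nlinarith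
      have f2 : (0:ℝ) ≤ 1 - w.re^2 - w.im^2 := by nlinarith
      nlinarith [mul_nonneg f1 f2]
    nlinarith [norm_nonneg (w - σ), norm_nonneg ((1:ℂ) - σ * w)]
  have hKnorm : ‖aeval Mz (Polynomial.X - C σ) * Ring.inverse (aeval Mz ((1:ℂ[X]) - C σ * Polynomial.X))‖ ≤ 1 :=
    hN.trans hsup
  -- membership proofs
  have hs2 : (0:ℝ) ≤ s^2 := by positivity
  have hs21 : s^2 < 1 := by nlinarith
  have hinv1 : 1 ≤ s⁻¹ := (one_le_inv₀ h0).2 h1.le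
  have hGmem : Memℓp (gfun u z σ) (2:ℝ≥0∞) := by
    apply memlp2_of_bound (gfun u z σ) ((‖u‖^2 + ‖z‖^2) * (s⁻¹)^4) (s^2) hs2 hs21
    intro n
    rcases n with _ | _ | k
    · simp [gfun]
      positivity
    · have e : (‖u‖^2 + ‖z‖^2) * (s⁻¹)^4 * (s^2)^1 = (‖u‖^2 + ‖z‖^2) * (s⁻¹)^2 := by
        field_simp
      rw [e]
      have hi2 : (1:ℝ) ≤ (s⁻¹)^2 := one_le_pow₀ hinv1
      have hn : (0:ℝ) ≤ ‖u‖^2 + ‖z‖^2 := by positivity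
      simp only [gfun]
      nlinarith [sq_nonneg ‖z‖, mul_nonneg hn (by linarith : (0:ℝ) ≤ (s⁻¹)^2 - 1)]
    · have e : (‖u‖^2 + ‖z‖^2) * (s⁻¹)^4 * (s^2)^(k+2) = (‖u‖^2 + ‖z‖^2) * (s^2)^k := by
        rw [show k+2 = k+1+1 from rfl, pow_succ, pow_succ]
        field_simp
        ring
      rw [e]
      simp only [gfun]
      rw [norm_smul, norm_pow, hσnorm, mul_pow,
        show ((s:ℝ)^k)^2 = (s^2)^k from by rw [← pow_mul, ← pow_mul, mul_comm]]
      nlinarith [sq_nonneg ‖u‖, pow_nonneg hs2 k, sq_nonneg ‖z‖, mul_nonneg (pow_nonneg hs2 k) (sq_nonneg ‖z‖), mul_nonneg (pow_nonneg hs2 k) (sq_nonneg ‖u‖)]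
  have hAmem : Memℓp (afun u z σ) (2:ℝ≥0∞) := by
    apply memlp2_of_bound (afun u z σ) ((‖σ • u‖^2 + ‖u - σ • z‖^2 + ‖z‖^2) * (s⁻¹)^4) (s^2) hs2 hs21
    intro n
    have hii : (1:ℝ) ≤ (s⁻¹)^4 := one_le_pow₀ hinv1
    have hsum : (0:ℝ) ≤ ‖σ • u‖^2 + ‖u - σ • z‖^2 + ‖z‖^2 := by positivity
    rcases n with _ | _ | k
    · simp only [afun, pow_zero, mul_one, norm_neg]
      nlinarith [sq_nonneg ‖u - σ • z‖, sq_nonneg ‖z‖,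
        mul_nonneg hsum (by linarith : (0:ℝ) ≤ (s⁻¹)^4 - 1)]
    · have e : (‖σ • u‖^2 + ‖u - σ • z‖^2 + ‖z‖^2) * (s⁻¹)^4 * (s^2)^1 = (‖σ • u‖^2 + ‖u - σ • z‖^2 + ‖z‖^2) * (s⁻¹)^2 := by
        field_simp
      rw [e]
      have h2 : (1:ℝ) ≤ (s⁻¹)^2 := one_le_pow₀ hinv1
      have hp : (0:ℝ) ≤ (‖σ • u‖^2 + ‖u - σ • z‖^2 + ‖z‖^2) * ((s⁻¹)^2 - 1) :=
        mul_nonneg hsum (by linarith)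
      show ‖u - σ • z‖^(2:ℕ) ≤ _
      linarith [sq_nonneg ‖σ • u‖, sq_nonneg ‖z‖, hp]
    · have e : (‖σ • u‖^2 + ‖u - σ • z‖^2 + ‖z‖^2) * (s⁻¹)^4 * (s^2)^(k+2) = (‖σ • u‖^2 + ‖u - σ • z‖^2 + ‖z‖^2) * (s^2)^k := by
        rw [show k+2 = k+1+1 from rfl, pow_succ, pow_succ]
        field_simp
        ring
      rw [e]
      simp only [afun]
      rw [norm_smul, norm_smul, norm_pow, hσnorm, mul_pow, mul_pow,
        show ((s:ℝ)^k)^2 = (s^2)^k from by rw [← pow_mul, ← pow_mul, mul_comm]]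
      have hc : ‖(1:ℂ) - σ^2‖ = 1 - s^2 := by
        have : (1:ℂ) - σ^2 = (((1 - s^2 : ℝ)):ℂ) := by
          rw [hσ]
          push_cast
          ring
        rw [this, Complex.norm_real, Real.norm_eq_abs, abs_of_pos (by nlinarith)]
      rw [hc]
      have hle1 : (1 - s^2)^2 ≤ 1 := by nlinarith
      nlinarith [pow_nonneg hs2 k, sq_nonneg ‖z‖, sq_nonneg ‖σ • u‖, sq_nonneg ‖u - σ • z‖,
        mul_nonneg (pow_nonneg hs2 k) (sq_nonneg ‖z‖),
        mul_nonneg (pow_nonneg hs2 k) (sq_nonneg ‖σ • u‖),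
        mul_nonneg (pow_nonneg hs2 k) (sq_nonneg ‖u - σ • z‖),
        mul_nonneg (mul_nonneg (pow_nonneg hs2 k) (sq_nonneg ‖z‖)) (by nlinarith : (0:ℝ) ≤ 1 - (1-s^2)^2)]
  have hBmem : Memℓp (bfun u z σ) (2:ℝ≥0∞) := by
    apply memlp2_of_bound (bfun u z σ) ((‖u‖^2 + ‖z - σ • u‖^2) * (s⁻¹)^2) (s^2) hs2 hs21
    intro n
    have h2 : (1:ℝ) ≤ (s⁻¹)^2 := one_le_pow₀ hinv1
    have hsum : (0:ℝ) ≤ ‖u‖^2 + ‖z - σ • u‖^2 := by positivity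
    rcases n with _ | _ | k
    · simp only [bfun, pow_zero, mul_one]
      nlinarith [sq_nonneg ‖z - σ • u‖,
        mul_nonneg hsum (by linarith : (0:ℝ) ≤ (s⁻¹)^2 - 1)]
    · have e : (‖u‖^2 + ‖z - σ • u‖^2) * (s⁻¹)^2 * (s^2)^1 = ‖u‖^2 + ‖z - σ • u‖^2 := by
        field_simp
      rw [e]
      simp only [bfun]
      nlinarith [sq_nonneg ‖u‖]
    · simp only [bfun, norm_zero]
      rw [zero_pow (by norm_num : (2:ℕ) ≠ 0)]
      positivity
  -- lp elements
  set G : lp (fun _ : ℕ => X) 2 := ⟨gfun u z σ, hGmem⟩ with hG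
  set A : lp (fun _ : ℕ => X) 2 := ⟨afun u z σ, hAmem⟩ with hA
  set B : lp (fun _ : ℕ => X) 2 := ⟨bfun u z σ, hBmem⟩ with hB
  have hGco : ∀ n, G n = gfun u z σ n := fun n => rfl
  have hAco : ∀ n, A n = afun u z σ n := fun n => rfl
  have hBco : ∀ n, B n = bfun u z σ n := fun n => rfl
  -- the operators
  have hQop : aeval Mz ((1:ℂ[X]) - C σ * Polynomial.X) = 1 - σ • Mz := by
    rw [map_sub, map_one, map_mul, aeval_C, aeval_X, Algebra.algebraMap_eq_smul_one,
      smul_mul_assoc, one_mul]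
  have hPop : aeval Mz (Polynomial.X - C σ) = Mz - σ • 1 := by
    rw [map_sub, aeval_C, aeval_X, Algebra.algebraMap_eq_smul_one]
  have hQG : (aeval Mz ((1:ℂ[X]) - C σ * Polynomial.X)) G = A := by
    rw [hQop]
    apply lp.ext
    funext n
    have hcoord : ((1 - σ • Mz) G) n = G n - σ • (G (n+1)) := by
      rw [ContinuousLinearMap.sub_apply, ContinuousLinearMap.one_apply,
        ContinuousLinearMap.smul_apply]
      rw [lp.coeFn_sub, Pi.sub_apply, lp.coeFn_smul, Pi.smul_apply, hMz]
    rw [hcoord, hGco, hGco, hAco]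
    rcases n with _ | _ | k
    · show (0:X) - σ • u = -(σ • u)
      rw [zero_sub]
    · show u - σ • (σ^0 • z) = u - σ • z
      rw [pow_zero, one_smul]
    · show σ^k • z - σ • (σ^(k+1) • z) = ((1:ℂ) - σ^2) • σ^k • z
      match_scalars
      ring
  have hPG : (aeval Mz (Polynomial.X - C σ)) G = B := by
    rw [hPop]
    apply lp.ext
    funext n
    have hcoord : ((Mz - σ • 1) G) n = G (n+1) - σ • (G n) := by
      rw [ContinuousLinearMap.sub_apply, ContinuousLinearMap.smul_apply,
        ContinuousLinearMap.one_apply]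
      rw [lp.coeFn_sub, Pi.sub_apply, lp.coeFn_smul, Pi.smul_apply, hMz]
    rw [hcoord, hGco, hGco, hBco]
    rcases n with _ | _ | k
    · show u - σ • (0:X) = u
      rw [smul_zero, sub_zero]
    · show σ^0 • z - σ • u = z - σ • u
      rw [pow_zero, one_smul]
    · show σ^(k+1) • z - σ • (σ^k • z) = (0:X)
      match_scalars
      ring
  -- apply the operator inequality
  have hRA : Ring.inverse (aeval Mz ((1:ℂ[X]) - C σ * Polynomial.X)) A = G := by
    conv_lhs => rw [← hQG]
    rw [← ContinuousLinearMap.mul_apply, Ring.inverse_mul_cancel _ hU,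
      ContinuousLinearMap.one_apply]
  have hKA : (aeval Mz (Polynomial.X - C σ) * Ring.inverse (aeval Mz ((1:ℂ[X]) - C σ * Polynomial.X))) A = B := by
    rw [ContinuousLinearMap.mul_apply, hRA, hPG]
  have hle : ‖B‖ ≤ ‖A‖ := by
    calc ‖B‖ = ‖(aeval Mz (Polynomial.X - C σ) * Ring.inverse (aeval Mz ((1:ℂ[X]) - C σ * Polynomial.X))) A‖ := by rw [hKA]
    _ ≤ ‖aeval Mz (Polynomial.X - C σ) * Ring.inverse (aeval Mz ((1:ℂ[X]) - C σ * Polynomial.X))‖ * ‖A‖ :=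
        ContinuousLinearMap.le_opNorm _ _
    _ ≤ 1 * ‖A‖ := by
        apply mul_le_mul_of_nonneg_right hKnorm (norm_nonneg _)
    _ = ‖A‖ := one_mul _
  have hsq : ‖B‖^(2:ℕ) ≤ ‖A‖^(2:ℕ) := by
    apply pow_le_pow_left₀ (norm_nonneg _) hle
  rw [norm_sq_split A, norm_sq_split B] at hsq
  -- compute the coordinates
  have hB0 : ‖B 0‖ = ‖u‖ := by rw [hBco]; rfl
  have hB1 : ‖B 1‖ = ‖z - σ • u‖ := by rw [hBco]; rfl
  have hBtail : ∑' k : ℕ, ‖B (k+2)‖^(2:ℕ) = 0 := by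
    have : ∀ k : ℕ, ‖B (k+2)‖^(2:ℕ) = 0 := by
      intro k
      rw [hBco]
      show ‖(0:X)‖^2 = 0
      simp
    rw [tsum_congr this, tsum_zero]
  have hA0 : ‖A 0‖ = s * ‖u‖ := by
    rw [hAco]
    show ‖-(σ • u)‖ = s * ‖u‖
    rw [norm_neg, norm_smul, hσnorm]
  have hA1 : ‖A 1‖ = ‖u - σ • z‖ := by rw [hAco]; rfl
  have hAtail : ∑' k : ℕ, ‖A (k+2)‖^(2:ℕ) = (1-s^2)^2 * ‖z‖^2 * (1 - s^2)⁻¹ := by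
    have hco : ∀ k : ℕ, ‖A (k+2)‖^(2:ℕ) = ‖((1:ℂ) - σ^2) • σ^k • z‖^(2:ℕ) := fun k => rfl
    rw [tsum_congr hco, tail_sum _ _ _ h0.le h1]
    congr 2
    have : (1:ℂ) - σ^2 = (((1 - s^2 : ℝ)):ℂ) := by
      rw [hσ]; push_cast; ring
    rw [this, Complex.norm_real, Real.norm_eq_abs, abs_of_pos (by nlinarith)]
  rw [hB0, hB1, hBtail, hA0, hA1, hAtail] at hsq
  have hs2ne : (1:ℝ) - s^2 ≠ 0 := by nlinarith
  have htail_eq : (1-s^2)^2 * ‖z‖^2 * (1 - s^2)⁻¹ = (1-s^2) * ‖z‖^2 := by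
    field_simp
  rw [htail_eq] at hsq
  have hmp : (s * ‖u‖)^2 = s^2 * ‖u‖^2 := by ring
  rw [hmp] at hsq
  nlinarith [hsq]


end Stmt12



-- step: from the key inequality to the equality (G_s)
lemma geq {X : Type} [NormedAddCommGroup X] [NormedSpace ℂ X]
    (key : ∀ s : ℝ, 0 < s → s < 1 → ∀ u z : X,
      (1 - s^2) * ‖u‖^2 + ‖z - s • u‖^2 ≤ ‖u - s • z‖^2 + (1 - s^2) * ‖z‖^2) :
    ∀ s : ℝ, 0 < s → s < 1 → ∀ u z : X,
      ‖u - s • z‖^2 - ‖z - s • u‖^2 = (1 - s^2) * (‖u‖^2 - ‖z‖^2) := by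
  intro s h0 h1 u z
  have h1' := key s h0 h1 u z
  have h2' := key s h0 h1 z u
  linarith

-- homogeneity of B
lemma bhomog {X : Type} [NormedAddCommGroup X] [NormedSpace ℂ X]
    (G : ∀ s : ℝ, 0 < s → s < 1 → ∀ u z : X,
      ‖u - s • z‖^2 - ‖z - s • u‖^2 = (1 - s^2) * (‖u‖^2 - ‖z‖^2)) :
    ∀ (α β : ℝ) (x y : X),
      ‖α • x + β • y‖^2 - ‖α • x - β • y‖^2 = α * β * (‖x + y‖^2 - ‖x - y‖^2) := by
  intro α β x y
  -- homogeneity of norm squared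
  have hsq : ∀ (lam : ℝ) (v : X), ‖lam • v‖^2 = lam^2 * ‖v‖^2 := by
    intro l v
    rw [norm_smul]
    simp [mul_pow, Real.norm_eq_abs, sq_abs]
  -- base case: for s ∈ (-1,1)
  have base : ∀ s : ℝ, -1 < s → s < 1 → ∀ x y : X,
      ‖(1+s) • x + (1-s) • y‖^2 - ‖(1+s) • x - (1-s) • y‖^2
        = (1 - s^2) * (‖x + y‖^2 - ‖x - y‖^2) := by
    -- first for s ∈ (0,1)
    have pos : ∀ s : ℝ, 0 < s → s < 1 → ∀ x y : X,
        ‖(1+s) • x + (1-s) • y‖^2 - ‖(1+s) • x - (1-s) • y‖^2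
          = (1 - s^2) * (‖x + y‖^2 - ‖x - y‖^2) := by
      intro s h0 h1 x y
      have := G s h0 h1 (x + y) (y - x)
      have e1 : (x + y) - s • (y - x) = (1+s) • x + (1-s) • y := by module
      have e2 : (y - x) - s • (x + y) = -((1+s) • x - (1-s) • y) := by module
      rw [e1, e2, norm_neg] at this
      have e3 : ‖y - x‖ = ‖x - y‖ := by rw [← norm_neg]; congr 1; abel
      rw [e3] at this
      linarith
    intro s hm h1 x y
    rcases lt_trichotomy s 0 with hs | hs | hs
    · have := pos (-s) (by linarith) (by linarith) y x
      have e1 : ‖(1+(-s)) • y + (1-(-s)) • x‖ = ‖(1+s) • x + (1-s) • y‖ := by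
        congr 1; module
      have e2 : ‖(1+(-s)) • y - (1-(-s)) • x‖ = ‖(1+s) • x - (1-s) • y‖ := by
        rw [← norm_neg]; congr 1; module
      have e3 : ‖y + x‖ = ‖x + y‖ := by congr 1; abel
      have e4 : ‖y - x‖ = ‖x - y‖ := by rw [← norm_neg]; congr 1; abel
      rw [e1, e2, e3, e4] at this
      rw [this]; ring
    · subst hs; simp [one_smul]
    · exact pos s hs h1 x y
  -- reduce general α β to the base case
  -- handle zero cases
  rcases eq_or_ne α 0 with rfl | hα
  · have : ‖(0:ℝ) • x + β • y‖ = ‖(0:ℝ) • x - β • y‖ := by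
      rw [zero_smul, zero_add, zero_sub, norm_neg]
    rw [this]; ring
  rcases eq_or_ne β 0 with rfl | hβ
  · have : ‖α • x + (0:ℝ) • y‖ = ‖α • x - (0:ℝ) • y‖ := by
      rw [zero_smul, add_zero, sub_zero]
    rw [this]; ring
  -- positive case
  have main : ∀ (a b : ℝ), 0 < a → 0 < b →
      ‖a • x + b • y‖^2 - ‖a • x - b • y‖^2 = a * b * (‖x + y‖^2 - ‖x - y‖^2) := by
    intro a b ha hb
    set l : ℝ := (a + b) / 2 with hl
    have hlpos : 0 < l := by positivity
    set s : ℝ := (a - b) / (a + b) with hs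
    have hab : (0:ℝ) < a + b := by linarith
    have hs1 : s < 1 := by
      rw [hs, div_lt_one hab]; linarith
    have hsm : -1 < s := by
      rw [hs, neg_lt, ← neg_div, div_lt_one hab]; linarith
    have h1 : l * (1 + s) = a := by
      rw [hl, hs]; field_simp; ring
    have h2 : l * (1 - s) = b := by
      rw [hl, hs]; field_simp; ring
    have e1 : a • x + b • y = l • ((1+s) • x + (1-s) • y) := by
      rw [smul_add, smul_smul, smul_smul, h1, h2]
    have e2 : a • x - b • y = l • ((1+s) • x - (1-s) • y) := by
      rw [smul_sub, smul_smul, smul_smul, h1, h2]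
    rw [e1, e2, hsq, hsq, ← mul_sub, base s hsm hs1 x y, ← mul_assoc]
    have : l^2 * (1 - s^2) = a * b := by
      have : l^2 * (1 - s^2) = (l * (1+s)) * (l * (1-s)) := by ring
      rw [this, h1, h2]
    rw [this]
  -- signs
  rcases lt_or_gt_of_ne hα with hαneg | hαpos
  · rcases lt_or_gt_of_ne hβ with hβneg | hβpos
    · have := main (-α) (-β) (by linarith) (by linarith)
      have e1 : ‖(-α) • x + (-β) • y‖ = ‖α • x + β • y‖ := by
        rw [← norm_neg]; congr 1; module
      have e2 : ‖(-α) • x - (-β) • y‖ = ‖α • x - β • y‖ := by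
        rw [← norm_neg]; congr 1; module
      rw [e1, e2] at this; rw [this]; ring
    · have := main (-α) β (by linarith) hβpos
      have e1 : ‖(-α) • x + β • y‖ = ‖α • x - β • y‖ := by
        rw [← norm_neg]; congr 1; module
      have e2 : ‖(-α) • x - β • y‖ = ‖α • x + β • y‖ := by
        rw [← norm_neg]; congr 1; module
      rw [e1, e2] at this; linarith [this]
  · rcases lt_or_gt_of_ne hβ with hβneg | hβpos
    · have := main α (-β) hαpos (by linarith)
      have e1 : ‖α • x + (-β) • y‖ = ‖α • x - β • y‖ := by
        congr 1; module
      have e2 : ‖α • x - (-β) • y‖ = ‖α • x + β • y‖ := by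
        congr 1; module
      rw [e1, e2] at this; linarith [this]
    · exact main α β hαpos hβpos


noncomputable def stmt12g {X : Type} [NormedAddCommGroup X] [NormedSpace ℂ X]
    (p q : X) (t : ℝ) : ℝ := ‖p + t • q‖^2

noncomputable def stmt12E {X : Type} [NormedAddCommGroup X] [NormedSpace ℂ X]
    (p q : X) (t : ℝ) : ℝ := (stmt12g p q t + stmt12g p q (-t)) / 2

noncomputable def stmt12chi {X : Type} [NormedAddCommGroup X] [NormedSpace ℂ X]
    (p q : X) (t : ℝ) : ℝ := stmt12E p q (t + 1) - stmt12E p q (t - 1)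


lemma stmt12aux (c A : ℝ) (hA : 0 ≤ A)
    (h : ∀ t : ℝ, 0 ≤ t → |t^2 * c| ≤ A + A * t) : c = 0 := by
  by_contra hc
  have habs : 0 < |c| := abs_pos.2 hc
  obtain ⟨t, ht⟩ : ∃ t : ℝ, t = (A+1)/|c| + A + 1 := ⟨_, rfl⟩
  have hdiv : 0 ≤ (A+1)/|c| := by positivity
  have ht1 : 1 ≤ t := by rw [ht]; linarith
  have ht0 : (0:ℝ) ≤ t := by linarith
  have h1 := h t ht0
  have h2 : |t^2 * c| = t^2 * |c| := by
    rw [abs_mul, abs_of_nonneg (sq_nonneg t)]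
  have h3 : A + 1 ≤ t * |c| := by
    rw [ht, add_mul, add_mul, div_mul_cancel₀ _ (ne_of_gt habs)]
    nlinarith
  have h4 : (A+1) * t ≤ t^2 * |c| := by
    have e : t^2 * |c| = (t * |c|) * t := by ring
    rw [e]
    exact mul_le_mul_of_nonneg_right h3 ht0
  nlinarith

lemma parallelogram_of_bhomog {X : Type} [NormedAddCommGroup X] [NormedSpace ℂ X]
    (hB : ∀ (α β : ℝ) (x y : X),
      ‖α • x + β • y‖^2 - ‖α • x - β • y‖^2 = α * β * (‖x + y‖^2 - ‖x - y‖^2)) :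
    ∀ p q : X, ‖p + q‖^2 + ‖p - q‖^2 = 2 * (‖p‖^2 + ‖q‖^2) := by
  intro p q
  set g : ℝ → ℝ := stmt12g p q with hg
  set E : ℝ → ℝ := stmt12E p q with hE
  set χ : ℝ → ℝ := stmt12chi p q with hχ
  have hgdef : ∀ t : ℝ, g t = ‖p + t • q‖^2 := fun t => rfl
  have hEdef : ∀ t : ℝ, E t = (g t + g (-t)) / 2 := fun t => rfl
  have hχdef : ∀ t : ℝ, χ t = E (t + 1) - E (t - 1) := fun t => rfl
  -- (a)  g(η+ε) - g(η-ε) = ε (g(η+1) - g(η-1))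
  have ha : ∀ η ε : ℝ, g (η + ε) - g (η - ε) = ε * (g (η + 1) - g (η - 1)) := by
    intro η ε
    have h := hB 1 ε (p + η • q) q
    have e1 : (1:ℝ) • (p + η • q) + ε • q = p + (η + ε) • q := by module
    have e2 : (1:ℝ) • (p + η • q) - ε • q = p + (η - ε) • q := by module
    have e3 : (p + η • q) + q = p + (η + 1) • q := by module
    have e4 : (p + η • q) - q = p + (η - 1) • q := by module
    rw [e1, e2, e3, e4] at h
    rw [hgdef, hgdef, hgdef, hgdef]
    rw [h]; ring
  -- (b)  E(η+ε) - E(η-ε) = ε χ(η)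
  have hb : ∀ η ε : ℝ, E (η + ε) - E (η - ε) = ε * χ η := by
    intro η ε
    have h1 := ha η ε
    have h2 := ha (-η) (-ε)
    have h4 := ha (-η) (-1)
    rw [hχdef, hEdef, hEdef, hEdef, hEdef]
    have r1 : -η + -ε = -(η + ε) := by ring
    have r2 : -η - -ε = -(η - ε) := by ring
    have r3 : -η + -1 = -(η + 1) := by ring
    have r4 : -η - -1 = -(η - 1) := by ring
    rw [r1, r2] at h2
    rw [r3, r4] at h4
    linear_combination h1/2 + h2/2 - ε/2 * h4
  have hEeven : ∀ t : ℝ, E (-t) = E t := by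
    intro t; rw [hEdef, hEdef, neg_neg]; ring
  have hE0 : E 0 = ‖p‖^2 := by
    rw [hEdef, hgdef, hgdef, neg_zero, zero_smul, add_zero]; ring
  have hχ0 : χ 0 = 0 := by
    rw [hχdef]
    have : (0:ℝ) - 1 = -(0+1) := by ring
    rw [this, hEeven]
    ring
  -- midpoint property
  have hmid : ∀ η ε : ℝ, ε ≠ 0 → χ (η + ε) + χ (η - ε) = 2 * χ η := by
    intro η ε hε
    have h1 := hb (η + ε) ε
    have h2 := hb (η - ε) ε
    have h3 := hb η (2*ε)
    have r1 : η + ε + ε = η + 2*ε := by ring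
    have r2 : η + ε - ε = η := by ring
    have r3 : η - ε + ε = η := by ring
    have r4 : η - ε - ε = η - 2*ε := by ring
    rw [r1, r2] at h1
    rw [r3, r4] at h2
    have hsum : ε * (χ (η + ε) + χ (η - ε)) = ε * (2 * χ η) := by
      have : ε * χ (η + ε) + ε * χ (η - ε) = 2*ε * χ η := by linarith
      linarith [this]
    exact mul_left_cancel₀ hε hsum
  -- doubling
  have hdbl : ∀ t : ℝ, χ (2*t) = 2 * χ t := by
    intro t
    rcases eq_or_ne t 0 with rfl | ht
    · rw [mul_zero, hχ0]; ring
    · have h := hmid t t ht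
      have r : t - t = 0 := by ring
      have r2 : t + t = 2*t := by ring
      rw [r, r2, hχ0] at h
      linarith
  -- additivity
  have hadd : ∀ a b : ℝ, χ (a + b) = χ a + χ b := by
    intro a b
    rcases eq_or_ne a b with rfl | hab
    · have h := hdbl a
      have r : a + a = 2*a := by ring
      rw [r, h]; ring
    · have hε : (a - b)/2 ≠ 0 := by
        intro h; apply hab; linarith
      have hm := hmid ((a+b)/2) ((a-b)/2) hε
      have r1 : (a+b)/2 + (a-b)/2 = a := by ring
      have r2 : (a+b)/2 - (a-b)/2 = b := by ring
      rw [r1, r2] at hm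
      have h2 := hdbl ((a+b)/2)
      have r3 : 2 * ((a+b)/2) = a + b := by ring
      rw [r3] at h2
      rw [h2]
      exact hm.symm
  -- continuity of χ
  have hcont : Continuous χ := by
    have hexpr : χ = fun t : ℝ =>
        (‖p + (t+1) • q‖^2 + ‖p + (-(t+1)) • q‖^2)/2
          - (‖p + (t-1) • q‖^2 + ‖p + (-(t-1)) • q‖^2)/2 := by
      funext t
      rw [hχdef, hEdef, hEdef, hgdef, hgdef, hgdef, hgdef]
    rw [hexpr]
    fun_prop
  -- χ is linear
  have hlin : ∀ t : ℝ, χ t = t * χ 1 := by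
    intro t
    have := map_real_smul (AddMonoidHom.mk' χ (fun a b => hadd a b)) hcont t 1
    simpa [smul_eq_mul] using this
  -- E t = E 0 + t² χ(1)/4
  have hEq : ∀ t : ℝ, E t = ‖p‖^2 + t^2 * χ 1 / 4 := by
    intro t
    have h := hb (t/2) (t/2)
    have r1 : t/2 + t/2 = t := by ring
    have r2 : t/2 - t/2 = 0 := by ring
    rw [r1, r2, hE0, hlin (t/2)] at h
    linarith
  -- asymptotic bound
  have hbound : ∀ t : ℝ, 0 ≤ t → |E t - t^2 * ‖q‖^2| ≤ ‖p‖^2 + 2*t*‖p‖*‖q‖ := by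
    intro t ht
    have htri1 : ‖p + t • q‖ ≤ ‖p‖ + t * ‖q‖ := by
      calc ‖p + t • q‖ ≤ ‖p‖ + ‖t • q‖ := norm_add_le _ _
      _ = ‖p‖ + t * ‖q‖ := by rw [norm_smul, Real.norm_eq_abs, abs_of_nonneg ht]
    have htri2 : |‖t • q‖ - ‖p‖| ≤ ‖p + t • q‖ := by
      have h := abs_norm_sub_norm_le (t • q) (-p)
      have r : t • q - -p = p + t • q := by abel
      rw [r] at h
      simpa [norm_neg] using h
    have htq : ‖t • q‖ = t * ‖q‖ := by rw [norm_smul, Real.norm_eq_abs, abs_of_nonneg ht]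
    rw [htq] at htri2
    have h2 := abs_le.1 htri2
    have htri1' : ‖p + (-t) • q‖ ≤ ‖p‖ + t * ‖q‖ := by
      calc ‖p + (-t) • q‖ ≤ ‖p‖ + ‖(-t) • q‖ := norm_add_le _ _
      _ = ‖p‖ + t * ‖q‖ := by rw [norm_smul, Real.norm_eq_abs, abs_neg, abs_of_nonneg ht]
    have htri2' : |‖(-t) • q‖ - ‖p‖| ≤ ‖p + (-t) • q‖ := by
      have h := abs_norm_sub_norm_le ((-t) • q) (-p)
      have r : (-t) • q - -p = p + (-t) • q := by abel
      rw [r] at h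
      simpa [norm_neg] using h
    have htq' : ‖(-t) • q‖ = t * ‖q‖ := by
      rw [norm_smul, Real.norm_eq_abs, abs_neg, abs_of_nonneg ht]
    rw [htq'] at htri2'
    have h2' := abs_le.1 htri2'
    have hn1 : (0:ℝ) ≤ ‖p + t • q‖ := norm_nonneg _
    have hn2 : (0:ℝ) ≤ ‖p + (-t) • q‖ := norm_nonneg _
    rw [hEdef, hgdef, hgdef, abs_le]
    constructor
    · nlinarith [h2.1, h2'.1, norm_nonneg p, norm_nonneg q]
    · nlinarith [htri1, htri1', norm_nonneg p, norm_nonneg q]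
  have hχ1 : χ 1 = 4 * ‖q‖^2 := by
    have hd := stmt12aux (χ 1 / 4 - ‖q‖^2) (2*‖p‖^2 + 2*‖p‖*‖q‖)
      (by positivity)
      (by
        intro t ht
        have hB2 := hbound t ht
        rw [hEq t] at hB2
        have r : ‖p‖^2 + t^2 * χ 1 / 4 - t^2 * ‖q‖^2
            = t^2 * (χ 1 / 4 - ‖q‖^2) + ‖p‖^2 := by ring
        rw [r] at hB2
        have h3 := abs_le.1 hB2
        have hpq : 0 ≤ ‖p‖*‖q‖ := by positivity
        have hp2 : 0 ≤ ‖p‖^2 := by positivity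
        rw [abs_le]
        constructor <;> nlinarith [h3.1, h3.2, mul_nonneg hpq ht])
    linarith
  -- conclusion
  have hfinal := hEq 1
  rw [hχ1] at hfinal
  have hE1 : E 1 = (‖p + q‖^2 + ‖p - q‖^2)/2 := by
    rw [hEdef, hgdef, hgdef]
    have e1 : p + (1:ℝ) • q = p + q := by module
    have e2 : p + (-1:ℝ) • q = p - q := by module
    rw [e1, e2]
  rw [hE1] at hfinal
  linarith


set_option maxHeartbeats 800000 in
/-- If `X` is a complex Banach space and the closed unit disk is a spectral set for the
backward shift `M̂_z (a₀, a₁, a₂, …) = (a₁, a₂, a₃, …)` on `ℓ²(X)`, then the norm of `X`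
satisfies the parallelogram law; equivalently, `X` is a Hilbert space. -/
theorem stmt_12 (X : Type) [NormedAddCommGroup X] [NormedSpace ℂ X] [CompleteSpace X]
    (Mz : lp (fun _ : ℕ => X) 2 →L[ℂ] lp (fun _ : ℕ => X) 2)
    (hMz : ∀ (x : lp (fun _ : ℕ => X) 2) (n : ℕ), Mz x n = x (n + 1))
    (hspec : spectrum ℂ Mz ⊆ closedBall (0 : ℂ) 1)
    (hvN : ∀ p q : ℂ[X], (∀ z ∈ closedBall (0 : ℂ) 1, q.eval z ≠ 0) →
      IsUnit (aeval Mz q) ∧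
      ‖aeval Mz p * Ring.inverse (aeval Mz q)‖ ≤
        sSup ((fun z => ‖p.eval z / q.eval z‖) '' closedBall (0 : ℂ) 1)) :
    (∀ x y : X, ‖x + y‖ ^ 2 + ‖x - y‖ ^ 2 = 2 * (‖x‖ ^ 2 + ‖y‖ ^ 2)) ∧
      Nonempty (InnerProductSpace ℂ X) := by
  have keyR : ∀ s : ℝ, 0 < s → s < 1 → ∀ u z : X,
      (1 - s^2) * ‖u‖^2 + ‖z - s • u‖^2 ≤ ‖u - s • z‖^2 + (1 - s^2) * ‖z‖^2 := by
    intro s h0 h1 u z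
    have h := Stmt12.key Mz hMz hvN s h0 h1 u z
    simpa only [Complex.coe_smul] using h
  have hpar := parallelogram_of_bhomog (bhomog (geq keyR))
  refine ⟨hpar, ⟨InnerProductSpace.ofNorm (𝕜 := ℂ) (E := X) ?_⟩⟩
  intro x y
  have h := hpar x y
  rw [← pow_two, ← pow_two, ← pow_two, ← pow_two]
  exact h
end

section
/- Let X be a complex Banach space and let M_z be the forward shift operator on ℓ²(X), defined by M_z(a_0, a_1, a_2, …) = (0, a_0, a_1, …). If the closed unit disk D̄ = {z ∈ ℂ : |z| ≤ 1} is a spectral set for M_z — i.e. σ(M_z) ⊆ D̄ and ‖p(M_z) q(M_z)^{−1}‖ ≤ sup_{|z| ≤ 1} |p(z)/q(z)| for all complex polynomials p, q with q having no zeros in D̄ — then X satisfies the parallelogram law: ‖x + y‖² + ‖x − y‖² = 2(‖x‖² + ‖y‖²) for all x, y ∈ X; equivalently, X is a Hilbert space. -/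
open Polynomial Metric ENNReal

private lemma lem_mobius (a : ℝ) (ha : |a| < 1) (z : ℂ) (hz : ‖z‖ ≤ 1) :
    ‖(a:ℂ) - z‖ ≤ ‖1 - (a:ℂ)*z‖ := by
  have hz2 : Complex.normSq z ≤ 1 := by
    rw [Complex.normSq_eq_norm_sq]
    have : ‖z‖ ≤ 1 := hz
    nlinarith [norm_nonneg z]
  have ha2 : a^2 < 1 := by nlinarith [abs_nonneg a, sq_abs a, abs_lt.1 ha]
  have h1 : Complex.normSq ((a:ℂ) - z) ≤ Complex.normSq (1 - (a:ℂ)*z) := by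
    simp only [Complex.normSq_apply, Complex.sub_re, Complex.sub_im, Complex.mul_re,
      Complex.mul_im, Complex.ofReal_re, Complex.ofReal_im, Complex.one_re, Complex.one_im] at *
    nlinarith [sq_nonneg (z.re), sq_nonneg (z.im)]
  rw [Complex.norm_def, Complex.norm_def]
  exact Real.sqrt_le_sqrt h1

private lemma lem_le_zero {r M : ℝ} (h : ∀ t : ℝ, 1 ≤ t → r * t^2 ≤ M * t) : r ≤ 0 := by
  by_contra hr
  push_neg at hr
  set t := max 1 (M/r + 1) with htdef
  have ht1 : 1 ≤ t := le_max_left _ _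
  have ht2 : M/r + 1 ≤ t := le_max_right _ _
  have ht0 : 0 < t := by linarith
  have h1 := h t ht1
  have h2 : M < r * t := by
    have h3 : M/r < t := by linarith
    calc M = r * (M/r) := by field_simp
      _ < r * t := mul_lt_mul_of_pos_left h3 hr
  nlinarith [h1, h2, ht0]

private lemma lem_quadratic (g : ℝ → ℝ) (hc : Continuous g)
    (hFE : ∀ s t : ℝ, 0 < t → g (s+t) - g (s-t) = t * (g (s+1) - g (s-1))) :
    ∃ β γ : ℝ, ∀ t, g t = g 0 + β * t + γ * t^2 := by
  set D : ℝ → ℝ := fun s => g (s+1) - g (s-1) with hD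
  have hFE' : ∀ s t : ℝ, g (s+t) - g (s-t) = t * D s := by
    intro s t
    rcases lt_trichotomy t 0 with h | h | h
    · have := hFE s (-t) (by linarith)
      have e1 : s + -t = s - t := by ring
      have e2 : s - -t = s + t := by ring
      rw [e1, e2] at this
      show g (s+t) - g (s-t) = t * (g (s+1) - g (s-1))
      linarith [this]
    · subst h; simp
    · exact hFE s t h
  have hmid : ∀ s u : ℝ, D (s+u) + D (s-u) = 2 * D s := by
    intro s u
    have h1 := hFE' (s+u) u
    have h2 := hFE' (s-u) u
    have h3 := hFE' s (2*u)
    have e1 : s + u + u = s + 2*u := by ring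
    have e2 : s + u - u = s := by ring
    have e3 : s - u + u = s := by ring
    have e4 : s - u - u = s - 2*u := by ring
    rw [e1, e2] at h1
    rw [e3, e4] at h2
    rcases eq_or_ne u 0 with rfl | hu
    · rw [add_zero, sub_zero]; ring
    · have key : u * (D (s+u) + D (s-u)) = u * (2 * D s) := by
        linear_combination h3 - h1 - h2
      exact mul_left_cancel₀ hu key
  have hadd : ∀ a b : ℝ, (D (a+b) - D 0) = (D a - D 0) + (D b - D 0) := by
    intro a b
    have h1 := hmid ((a+b)/2) ((a-b)/2)
    have h2 := hmid ((a+b)/2) ((a+b)/2)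
    have e1 : (a+b)/2 + (a-b)/2 = a := by ring
    have e2 : (a+b)/2 - (a-b)/2 = b := by ring
    have e3 : (a+b)/2 + (a+b)/2 = a + b := by ring
    have e4 : (a+b)/2 - (a+b)/2 = 0 := by ring
    rw [e1, e2] at h1
    rw [e3, e4] at h2
    linear_combination h2 - h1
  have hDc : Continuous D := by
    apply Continuous.sub
    · exact hc.comp (continuous_id.add continuous_const)
    · exact hc.comp (continuous_id.sub continuous_const)
  set E : ℝ →+ ℝ := AddMonoidHom.mk' (fun u => D u - D 0) hadd with hE
  have hEc : Continuous E := hDc.sub continuous_const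
  have hlin : ∀ u : ℝ, E u = u * E 1 := by
    intro u
    have := (E.toRealLinearMap hEc).map_smul u (1:ℝ)
    simp only [AddMonoidHom.coe_toRealLinearMap] at this
    simpa [smul_eq_mul, mul_comm] using this
  have hDs : ∀ s : ℝ, D s = D 0 + s * (D 1 - D 0) := by
    intro s
    have h1 := hlin s
    have h2 : E s = D s - D 0 := rfl
    have h3 : E 1 = D 1 - D 0 := rfl
    rw [h2, h3] at h1
    linarith
  refine ⟨D 0 / 2, (D 1 - D 0)/4, fun t => ?_⟩
  have h1 := hFE' (t/2) (t/2)
  have e1 : t/2 + t/2 = t := by ring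
  have e2 : t/2 - t/2 = 0 := by ring
  rw [e1, e2] at h1
  rw [hDs (t/2)] at h1
  linear_combination h1

private lemma lem_norm3 {Y : Type} [NormedAddCommGroup Y] [NormedSpace ℂ Y]
    (f : lp (fun _ : ℕ => Y) 2) (h : ∀ i : ℕ, 3 ≤ i → f i = 0) :
    ‖f‖ ^ 2 = ‖f 0‖ ^ 2 + ‖f 1‖ ^ 2 + ‖f 2‖ ^ 2 := by
  have hp : 0 < (2 : ℝ≥0∞).toReal := by norm_num
  have h1 := lp.norm_rpow_eq_tsum hp f
  have h2 : ∑' i : ℕ, ‖f i‖ ^ (2 : ℝ≥0∞).toReal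
      = ∑ i ∈ ({0, 1, 2} : Finset ℕ), ‖f i‖ ^ (2 : ℝ≥0∞).toReal := by
    apply tsum_eq_sum
    intro i hi
    have h3 : 3 ≤ i := by
      simp only [Finset.mem_insert, Finset.mem_singleton] at hi
      push_neg at hi
      omega
    rw [h i h3]
    simp [Real.zero_rpow (by norm_num : (2 : ℝ≥0∞).toReal ≠ 0)]
  rw [h2] at h1
  have e : (2 : ℝ≥0∞).toReal = ((2 : ℕ) : ℝ) := by norm_num
  rw [e] at h1
  simp only [Real.rpow_natCast] at h1
  rw [h1]
  norm_num [Finset.sum_insert, Finset.mem_insert]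
  ring

private lemma lem_key {Y : Type} [NormedAddCommGroup Y] [NormedSpace ℂ Y] [CompleteSpace Y]
    (Mz : lp (fun _ : ℕ => Y) 2 →L[ℂ] lp (fun _ : ℕ => Y) 2)
    (hvN : ∀ p q : ℂ[X], (∀ z ∈ closedBall (0 : ℂ) 1, q.eval z ≠ 0) →
      IsUnit (aeval Mz q) ∧
      ‖aeval Mz p * Ring.inverse (aeval Mz q)‖ ≤
        sSup ((fun z => ‖p.eval z / q.eval z‖) '' closedBall (0 : ℂ) 1))
    (a : ℝ) (ha : |a| < 1) (w : lp (fun _ : ℕ => Y) 2) :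
    ‖(a:ℂ) • w - Mz w‖ ≤ ‖w - (a:ℂ) • Mz w‖ := by
  set p : ℂ[X] := C (a:ℂ) - X with hp
  set q : ℂ[X] := 1 - C (a:ℂ) * X with hq
  have hql : ∀ z : ℂ, q.eval z = 1 - (a:ℂ) * z := by
    intro z; simp [hq]
  have hpl : ∀ z : ℂ, p.eval z = (a:ℂ) - z := by
    intro z; simp [hp]
  have hqne : ∀ z ∈ closedBall (0 : ℂ) 1, q.eval z ≠ 0 := by
    intro z hz
    rw [mem_closedBall_zero_iff] at hz
    rw [hql]
    intro h0
    have h1 : ‖(a:ℂ) * z‖ < 1 := by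
      rw [norm_mul, Complex.norm_real, Real.norm_eq_abs]
      calc |a| * ‖z‖ ≤ |a| * 1 := mul_le_mul_of_nonneg_left hz (abs_nonneg a)
        _ < 1 := by rwa [mul_one]
    have h2 : (a:ℂ) * z = 1 := by linear_combination -h0
    rw [h2, norm_one] at h1
    exact lt_irrefl _ h1
  obtain ⟨hU, hnorm⟩ := hvN p q hqne
  have hsup : sSup ((fun z => ‖p.eval z / q.eval z‖) '' closedBall (0 : ℂ) 1) ≤ 1 := by
    apply Real.sSup_le _ zero_le_one
    rintro r ⟨z, hz, rfl⟩
    have hz1 : ‖z‖ ≤ 1 := mem_closedBall_zero_iff.1 hz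
    show ‖p.eval z / q.eval z‖ ≤ 1
    rw [hpl, hql, norm_div]
    exact div_le_one_of_le₀ (lem_mobius a ha z hz1) (norm_nonneg _)
  have hT : ‖aeval Mz p * Ring.inverse (aeval Mz q)‖ ≤ 1 := hnorm.trans hsup
  have hcomp : (aeval Mz p * Ring.inverse (aeval Mz q)) * (aeval Mz q) = aeval Mz p := by
    rw [mul_assoc, Ring.inverse_mul_cancel _ hU, mul_one]
  have hAw : (aeval Mz p) w = (a:ℂ) • w - Mz w := by
    rw [hp, map_sub, aeval_C, aeval_X]
    rfl
  have hBw : (aeval Mz q) w = w - (a:ℂ) • Mz w := by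
    rw [hq, map_sub, map_one, map_mul, aeval_C, aeval_X]
    rfl
  calc ‖(a:ℂ) • w - Mz w‖ = ‖(aeval Mz p) w‖ := by rw [hAw]
    _ = ‖(aeval Mz p * Ring.inverse (aeval Mz q)) ((aeval Mz q) w)‖ := by
        conv_lhs => rw [← hcomp]
        rfl
    _ ≤ ‖aeval Mz p * Ring.inverse (aeval Mz q)‖ * ‖(aeval Mz q) w‖ :=
        ContinuousLinearMap.le_opNorm _ _
    _ ≤ 1 * ‖(aeval Mz q) w‖ := mul_le_mul_of_nonneg_right hT (norm_nonneg _)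
    _ = ‖w - (a:ℂ) • Mz w‖ := by rw [one_mul, hBw]

private lemma lem_ineq {Y : Type} [NormedAddCommGroup Y] [NormedSpace ℂ Y] [CompleteSpace Y]
    (Mz : lp (fun _ : ℕ => Y) 2 →L[ℂ] lp (fun _ : ℕ => Y) 2)
    (hMz : ∀ x : lp (fun _ : ℕ => Y) 2, Mz x 0 = 0 ∧ ∀ n : ℕ, Mz x (n + 1) = x n)
    (a : ℝ)
    (key : ∀ w : lp (fun _ : ℕ => Y) 2, ‖(a:ℂ) • w - Mz w‖ ≤ ‖w - (a:ℂ) • Mz w‖)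
    (x y : Y) :
    a^2*‖x‖^2 + ‖(a:ℂ)•y - x‖^2 + ‖y‖^2 ≤ ‖x‖^2 + ‖y - (a:ℂ)•x‖^2 + a^2*‖y‖^2 := by
  set w : lp (fun _ : ℕ => Y) 2 := lp.single 2 0 x + lp.single 2 1 y with hwdef
  have hw0 : w 0 = x := by
    rw [hwdef, lp.coeFn_add, Pi.add_apply, lp.single_apply_self (E := fun _ : ℕ => Y),
      lp.single_apply_ne (E := fun _ : ℕ => Y) 2 1 y (show (0:ℕ) ≠ 1 by norm_num), add_zero]
  have hw1 : w 1 = y := by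
    rw [hwdef, lp.coeFn_add, Pi.add_apply, lp.single_apply_self (E := fun _ : ℕ => Y),
      lp.single_apply_ne (E := fun _ : ℕ => Y) 2 0 x (show (1:ℕ) ≠ 0 by norm_num), zero_add]
  have hwge : ∀ i : ℕ, 2 ≤ i → w i = 0 := by
    intro i hi
    rw [hwdef, lp.coeFn_add, Pi.add_apply,
      lp.single_apply_ne (E := fun _ : ℕ => Y) 2 0 x (show i ≠ 0 by omega),
      lp.single_apply_ne (E := fun _ : ℕ => Y) 2 1 y (show i ≠ 1 by omega), add_zero]
  set L : lp (fun _ : ℕ => Y) 2 := (a:ℂ) • w - Mz w with hLdef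
  set R : lp (fun _ : ℕ => Y) 2 := w - (a:ℂ) • Mz w with hRdef
  have hL : ∀ i : ℕ, L i = (a:ℂ) • w i - Mz w i := by
    intro i
    rw [hLdef, lp.coeFn_sub, Pi.sub_apply, lp.coeFn_smul, Pi.smul_apply]
  have hR : ∀ i : ℕ, R i = w i - (a:ℂ) • Mz w i := by
    intro i
    rw [hRdef, lp.coeFn_sub, Pi.sub_apply, lp.coeFn_smul, Pi.smul_apply]
  have hL0 : L 0 = (a:ℂ) • x := by rw [hL 0, (hMz w).1, hw0, sub_zero]
  have hL1 : L 1 = (a:ℂ) • y - x := by rw [hL 1, (hMz w).2 0, hw1, hw0]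
  have hL2 : L 2 = -y := by
    rw [hL 2, (hMz w).2 1, hw1, hwge 2 le_rfl, smul_zero, zero_sub]
  have hLge : ∀ i : ℕ, 3 ≤ i → L i = 0 := by
    intro i hi
    obtain ⟨n, rfl⟩ : ∃ n, i = n + 1 := ⟨i - 1, by omega⟩
    rw [hL (n+1), (hMz w).2 n, hwge (n+1) (by omega), hwge n (by omega), smul_zero, sub_zero]
  have hR0 : R 0 = x := by rw [hR 0, (hMz w).1, hw0, smul_zero, sub_zero]
  have hR1 : R 1 = y - (a:ℂ) • x := by rw [hR 1, (hMz w).2 0, hw1, hw0]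
  have hR2 : R 2 = -((a:ℂ) • y) := by
    rw [hR 2, (hMz w).2 1, hw1, hwge 2 le_rfl, zero_sub]
  have hRge : ∀ i : ℕ, 3 ≤ i → R i = 0 := by
    intro i hi
    obtain ⟨n, rfl⟩ : ∃ n, i = n + 1 := ⟨i - 1, by omega⟩
    rw [hR (n+1), (hMz w).2 n, hwge (n+1) (by omega), hwge n (by omega), smul_zero, sub_zero]
  have hnL := lem_norm3 L hLge
  have hnR := lem_norm3 R hRge
  rw [hL0, hL1, hL2, norm_neg] at hnL
  rw [hR0, hR1, hR2, norm_neg] at hnR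
  have hsm : ∀ v : Y, ‖(a:ℂ) • v‖ = |a| * ‖v‖ := by
    intro v
    rw [norm_smul, Complex.norm_real, Real.norm_eq_abs]
  have hkey : ‖L‖ ≤ ‖R‖ := key w
  have hkey2 : ‖L‖^2 ≤ ‖R‖^2 := pow_le_pow_left₀ (norm_nonneg _) hkey 2
  rw [hnL, hnR, hsm, hsm] at hkey2
  calc a^2*‖x‖^2 + ‖(a:ℂ)•y - x‖^2 + ‖y‖^2
      = (|a| * ‖x‖)^2 + ‖(a:ℂ)•y - x‖^2 + ‖y‖^2 := by rw [mul_pow, sq_abs]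
    _ ≤ ‖x‖^2 + ‖y - (a:ℂ)•x‖^2 + (|a| * ‖y‖)^2 := hkey2
    _ = ‖x‖^2 + ‖y - (a:ℂ)•x‖^2 + a^2*‖y‖^2 := by rw [mul_pow, sq_abs]

/-- If `X` is a complex Banach space and the closed unit disk is a spectral set for the
forward shift `M_z (a₀, a₁, a₂, …) = (0, a₀, a₁, …)` on `ℓ²(X)`, then the norm of `X`
satisfies the parallelogram law; equivalently, `X` is a Hilbert space. -/
theorem stmt_13 (X : Type) [NormedAddCommGroup X] [NormedSpace ℂ X] [CompleteSpace X]
    (Mz : lp (fun _ : ℕ => X) 2 →L[ℂ] lp (fun _ : ℕ => X) 2)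
    (hMz : ∀ x : lp (fun _ : ℕ => X) 2,
      Mz x 0 = 0 ∧ ∀ n : ℕ, Mz x (n + 1) = x n)
    (hspec : spectrum ℂ Mz ⊆ closedBall (0 : ℂ) 1)
    (hvN : ∀ p q : ℂ[X], (∀ z ∈ closedBall (0 : ℂ) 1, q.eval z ≠ 0) →
      IsUnit (aeval Mz q) ∧
      ‖aeval Mz p * Ring.inverse (aeval Mz q)‖ ≤
        sSup ((fun z => ‖p.eval z / q.eval z‖) '' closedBall (0 : ℂ) 1)) :
    (∀ x y : X, ‖x + y‖ ^ 2 + ‖x - y‖ ^ 2 = 2 * (‖x‖ ^ 2 + ‖y‖ ^ 2)) ∧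
      Nonempty (InnerProductSpace ℂ X) := by
  have par : ∀ x y : X, ‖x + y‖ ^ 2 + ‖x - y‖ ^ 2 = 2 * (‖x‖ ^ 2 + ‖y‖ ^ 2) := by
    have Eeq : ∀ a : ℝ, |a| < 1 → ∀ x y : X,
        ‖x - a•y‖^2 - ‖y - a•x‖^2 = (1-a^2)*(‖x‖^2-‖y‖^2) := by
      intro a ha x y
      have h1 := lem_ineq Mz hMz a (fun w => lem_key Mz hvN a ha w) x y
      have h2 := lem_ineq Mz hMz a (fun w => lem_key Mz hvN a ha w) y x
      rw [Complex.coe_smul, Complex.coe_smul] at h1 h2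
      rw [norm_sub_rev (a•y) x] at h1
      rw [norm_sub_rev (a•x) y] at h2
      linarith
    have hQ : ∀ t : ℝ, 0 < t → ∀ u v : X,
        ‖u + t•v‖^2 - ‖u - t•v‖^2 = t*(‖u+v‖^2 - ‖u-v‖^2) := by
      intro t ht u v
      set a : ℝ := (t-1)/(t+1) with hadef
      set l : ℝ := (t+1)/2 with hldef
      have ht1 : (0:ℝ) < t+1 := by linarith
      have ha : |a| < 1 := by
        rw [hadef, abs_div, abs_of_pos ht1, div_lt_one ht1, abs_lt]
        constructor <;> linarith
      have e1 : (1-a)*l = 1 := by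
        rw [hadef, hldef]; field_simp; try ring
      have e2 : (1+a)*l = t := by
        rw [hadef, hldef]; field_simp; try ring
      have hE := Eeq a ha (l•u + l•v) (l•u - l•v)
      have v1 : (l•u + l•v) - a•(l•u - l•v) = u + t•v := by
        have h : (l•u + l•v) - a•(l•u - l•v) = ((1-a)*l)•u + ((1+a)*l)•v := by module
        rw [h, e1, e2, one_smul]
      have v2 : (l•u - l•v) - a•(l•u + l•v) = u - t•v := by
        have h : (l•u - l•v) - a•(l•u + l•v) = ((1-a)*l)•u - ((1+a)*l)•v := by module
        rw [h, e1, e2, one_smul]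
      have v3 : l•u + l•v = l•(u+v) := by module
      have v4 : l•u - l•v = l•(u-v) := by module
      rw [v1, v2] at hE
      rw [v3, v4] at hE
      have hl0 : 0 ≤ l := by rw [hldef]; linarith
      have v5 : ‖l•(u+v)‖ = l*‖u+v‖ := by
        rw [norm_smul, Real.norm_eq_abs, abs_of_nonneg hl0]
      have v6 : ‖l•(u-v)‖ = l*‖u-v‖ := by
        rw [norm_smul, Real.norm_eq_abs, abs_of_nonneg hl0]
      rw [v5, v6] at hE
      have e3 : (1-a^2)*l^2 = t := by nlinarith [e1, e2]
      calc ‖u + t•v‖^2 - ‖u - t•v‖^2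
          = (1-a^2)*((l*‖u+v‖)^2 - (l*‖u-v‖)^2) := hE
        _ = ((1-a^2)*l^2)*(‖u+v‖^2 - ‖u-v‖^2) := by ring
        _ = t*(‖u+v‖^2 - ‖u-v‖^2) := by rw [e3]
    intro x y
    set g : ℝ → ℝ := fun t => ‖x + t•y‖^2 with hgdef
    have hcont : Continuous g := by
      apply Continuous.pow
      apply Continuous.norm
      exact continuous_const.add (continuous_id.smul continuous_const)
    have hFE : ∀ s t : ℝ, 0 < t → g (s+t) - g (s-t) = t*(g (s+1) - g (s-1)) := by
      intro s t ht
      have h := hQ t ht (x + s•y) y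
      have e1 : (x + s•y) + t•y = x + (s+t)•y := by module
      have e2 : (x + s•y) - t•y = x + (s-t)•y := by module
      have e3 : (x + s•y) + y = x + (s+1)•y := by module
      have e4 : (x + s•y) - y = x + (s-1)•y := by module
      rw [e1, e2, e3, e4] at h
      exact h
    obtain ⟨β, γ, hg⟩ := lem_quadratic g hcont hFE
    have hg0 : g 0 = ‖x‖^2 := by rw [hgdef]; simp
    have hg1 : g 1 = ‖x + y‖^2 := by rw [hgdef]; simp
    have hgm1 : g (-1) = ‖x - y‖^2 := by
      rw [hgdef]
      simp [sub_eq_add_neg]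
    have hup : ∀ t : ℝ, 1 ≤ t → g t ≤ (‖x‖ + t*‖y‖)^2 := by
      intro t ht
      have h1 : ‖x + t•y‖ ≤ ‖x‖ + t*‖y‖ := by
        calc ‖x + t•y‖ ≤ ‖x‖ + ‖t•y‖ := norm_add_le _ _
          _ = ‖x‖ + t*‖y‖ := by
              rw [norm_smul, Real.norm_eq_abs, abs_of_pos (by linarith : (0:ℝ) < t)]
      exact pow_le_pow_left₀ (norm_nonneg _) h1 2
    have hlo : ∀ t : ℝ, 1 ≤ t → (t*‖y‖ - ‖x‖)^2 ≤ g t := by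
      intro t ht
      have h1 : |‖t•y‖ - ‖-x‖| ≤ ‖t•y - (-x)‖ := abs_norm_sub_norm_le _ _
      have h2 : t•y - (-x) = x + t•y := by abel
      rw [h2, norm_neg, norm_smul, Real.norm_eq_abs, abs_of_pos (by linarith : (0:ℝ) < t)] at h1
      calc (t*‖y‖-‖x‖)^2 = |t*‖y‖ - ‖x‖|^2 := (sq_abs _).symm
        _ ≤ ‖x + t•y‖^2 := pow_le_pow_left₀ (abs_nonneg _) h1 2
        _ = g t := rfl
    have hd1 : γ - ‖y‖^2 ≤ 0 := by
      apply lem_le_zero (M := |‖x‖^2 - g 0| + |2*‖x‖*‖y‖ - β|)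
      intro t ht
      have h1 := hup t ht
      rw [hg t] at h1
      have h3 : (‖x‖^2 - g 0) ≤ |‖x‖^2 - g 0| * t := by
        have a1 := le_abs_self (‖x‖^2 - g 0)
        nlinarith [abs_nonneg (‖x‖^2 - g 0)]
      have h4 : (2*‖x‖*‖y‖-β)*t ≤ |2*‖x‖*‖y‖-β| * t :=
        mul_le_mul_of_nonneg_right (le_abs_self _) (by linarith)
      nlinarith [h1, h3, h4]
    have hd2 : ‖y‖^2 - γ ≤ 0 := by
      apply lem_le_zero (M := |g 0 - ‖x‖^2| + |2*‖x‖*‖y‖ + β|)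
      intro t ht
      have h1 := hlo t ht
      rw [hg t] at h1
      have h3 : (g 0 - ‖x‖^2) ≤ |g 0 - ‖x‖^2| * t := by
        have a1 := le_abs_self (g 0 - ‖x‖^2)
        nlinarith [abs_nonneg (g 0 - ‖x‖^2)]
      have h4 : (2*‖x‖*‖y‖+β)*t ≤ |2*‖x‖*‖y‖+β| * t :=
        mul_le_mul_of_nonneg_right (le_abs_self _) (by linarith)
      nlinarith [h1, h3, h4]
    have hγ : γ = ‖y‖^2 := by linarith
    have h1 := hg 1
    have h2 := hg (-1)
    rw [hg1] at h1
    rw [hgm1] at h2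
    rw [hg0] at h1 h2
    rw [h1, h2, hγ]
    ring
  refine ⟨par, ⟨InnerProductSpace.ofNorm (𝕜 := ℂ) (E := X) ?_⟩⟩
  intro x y
  have := par x y
  nlinarith [this]
end

section
/- Let X = ℂ² equipped with the ℓ¹-norm ‖(x, y)‖ = |x| + |y|, let λ ∈ (0, 1), and let T_λ : X → X be the operator T_λ(x, y) = (λ(x + y), 0). Then ‖T_λ‖ = λ, and the function A_{T_λ}(v) = (‖v‖² − ‖T_λ v‖²)^{1/2} fails the triangle inequality: for e₁ = (1, 0) and e₂ = (0, 1), A_{T_λ}(e₁ − e₂) = 2 while A_{T_λ}(e₁) + A_{T_λ}(−e₂) = 2√(1 − λ²) < 2. Consequently A_{T_λ} does not define a norm on X (and hence T_λ does not dilate to any isometry). -/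
lemma pilp_norm_two (v : PiLp 1 (fun _ : Fin 2 => ℂ)) : ‖v‖ = ‖v 0‖ + ‖v 1‖ := by
  rw [PiLp.norm_eq_sum (by norm_num)]
  simp [Fin.sum_univ_two]

/-- On `X = ℂ²` with the `ℓ¹`-norm, the operator `T_λ (x, y) = (λ(x + y), 0)` (for
`0 < λ < 1`) has norm `λ`, and the function `A_{T_λ}(v) = (‖v‖² − ‖T_λ v‖²)^{1/2}` fails the
triangle inequality (witnessed by `e₁ = (1,0)`, `e₂ = (0,1)`); consequently `A_{T_λ}` is not
a norm on `X` (and hence `T_λ` does not dilate to any isometry). -/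
theorem stmt_17 (lam : ℝ) (hlam₀ : 0 < lam) (hlam₁ : lam < 1)
    (T : PiLp 1 (fun _ : Fin 2 => ℂ) →L[ℂ] PiLp 1 (fun _ : Fin 2 => ℂ))
    (hT : ∀ v : PiLp 1 (fun _ : Fin 2 => ℂ), T v = ![(lam : ℂ) * (v 0 + v 1), 0]) :
    ‖T‖ = lam ∧
    ∀ A : PiLp 1 (fun _ : Fin 2 => ℂ) → ℝ,
      (A = fun v => Real.sqrt (‖v‖ ^ 2 - ‖T v‖ ^ 2)) →
      ∀ e₁ e₂ : PiLp 1 (fun _ : Fin 2 => ℂ), e₁ = WithLp.toLp 1 (![1, 0] : Fin 2 → ℂ) → e₂ = WithLp.toLp 1 (![0, 1] : Fin 2 → ℂ) →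
        A (e₁ - e₂) = 2 ∧
        A e₁ + A (-e₂) = 2 * Real.sqrt (1 - lam ^ 2) ∧
        2 * Real.sqrt (1 - lam ^ 2) < 2 ∧
        ¬ (∀ v w : PiLp 1 (fun _ : Fin 2 => ℂ), A (v + w) ≤ A v + A w) := by
  have hTnorm : ∀ v : PiLp 1 (fun _ : Fin 2 => ℂ), ‖T v‖ = lam * ‖v 0 + v 1‖ := by
    intro v
    rw [pilp_norm_two, hT]
    simp [abs_of_pos hlam₀]
  have hsq : Real.sqrt (1 - lam ^ 2) < 1 := by
    have h := Real.sqrt_lt_sqrt (by nlinarith : (0:ℝ) ≤ 1 - lam ^ 2)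
      (by nlinarith : 1 - lam ^ 2 < 1)
    simpa using h
  have hsqnn : 0 ≤ Real.sqrt (1 - lam ^ 2) := Real.sqrt_nonneg _
  constructor
  · apply le_antisymm
    · apply ContinuousLinearMap.opNorm_le_bound _ hlam₀.le
      intro v
      rw [hTnorm, pilp_norm_two]
      have := norm_add_le (v 0) (v 1)
      nlinarith
    · set u : PiLp 1 (fun _ : Fin 2 => ℂ) := WithLp.toLp 1 (![1, 0] : Fin 2 → ℂ) with hu
      have hu0 : u 0 = 1 := by rw [hu]; simp
      have hu1 : u 1 = 0 := by rw [hu]; simp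
      have h1 : ‖T u‖ = lam := by rw [hTnorm, hu0, hu1]; simp
      have h2 : ‖u‖ = 1 := by rw [pilp_norm_two, hu0, hu1]; simp
      calc lam = ‖T u‖ := h1.symm
        _ ≤ ‖T‖ * ‖u‖ := T.le_opNorm _
        _ = ‖T‖ := by rw [h2, mul_one]
  · intro A hA e₁ e₂ he₁ he₂
    have h10 : e₁ 0 = 1 := by rw [he₁]; simp
    have h11 : e₁ 1 = 0 := by rw [he₁]; simp
    have h20 : e₂ 0 = 0 := by rw [he₂]; simp
    have h21 : e₂ 1 = 1 := by rw [he₂]; simp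
    have hd0 : (e₁ - e₂) 0 = 1 := by simp [h10, h20]
    have hd1 : (e₁ - e₂) 1 = -1 := by simp [h11, h21]
    have hn0 : (-e₂) 0 = 0 := by simp [h20]
    have hn1 : (-e₂) 1 = -1 := by simp [h21]
    have key1 : A (e₁ - e₂) = 2 := by
      rw [hA]
      simp only
      rw [hTnorm, pilp_norm_two, hd0, hd1]
      norm_num
    have key2a : A e₁ = Real.sqrt (1 - lam ^ 2) := by
      rw [hA]
      simp only
      rw [hTnorm, pilp_norm_two, h10, h11]
      norm_num
    have key2b : A (-e₂) = Real.sqrt (1 - lam ^ 2) := by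
      rw [hA]
      simp only
      rw [hTnorm, pilp_norm_two, hn0, hn1]
      norm_num
    refine ⟨key1, by rw [key2a, key2b]; ring, by nlinarith, ?_⟩
    intro h
    have h' := h e₁ (-e₂)
    rw [← sub_eq_add_neg, key1, key2a, key2b] at h'
    nlinarith
end

section
/- Let H be a nonzero complex Hilbert space and let X = H ⊕₁ H be the Banach space of pairs (h₁, h₂) with norm ‖(h₁, h₂)‖ = ‖h₁‖ + ‖h₂‖. For r ∈ (0, 1) define T_r : X → X by T_r(h₁, h₂) = (r·h₁, 0). Then there exists r ∈ (0, 1) such that the function A_{T_r}(v) = (‖v‖² − ‖T_r v‖²)^{1/2} fails the triangle inequality: for a unit vector e ∈ H and e₁ = (e, 0), e₂ = (0, e), one has A_{T_r}(e₁ + e₂) = √(4 − r²) > 1 + √(1 − r²) = A_{T_r}(e₁) + A_{T_r}(e₂). Consequently A_{T_r} does not define a norm on X (and hence T_r does not dilate to any isometry). -/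
theorem norm1 {H : Type} [NormedAddCommGroup H] [InnerProductSpace ℂ H]
    (v : WithLp 1 (H × H)) : ‖v‖ = ‖v.ofLp.1‖ + ‖v.ofLp.2‖ := by
  rw [WithLp.prod_norm_eq_add (by norm_num)]
  norm_num

/-- Let `H` be a nonzero complex Hilbert space and `X = H ⊕₁ H`. Then there is `r ∈ (0,1)`
such that for the operator `T_r (h₁, h₂) = (r h₁, 0)` on `X`, the function
`A_{T_r}(v) = (‖v‖² − ‖T_r v‖²)^{1/2}` fails the triangle inequality: for a unit vector
`e ∈ H`, with `e₁ = (e, 0)` and `e₂ = (0, e)`, one has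
`A(e₁ + e₂) = √(4 − r²) > 1 + √(1 − r²) = A(e₁) + A(e₂)`. Consequently `A_{T_r}` is not a
norm on `X` (and hence `T_r` does not dilate to any isometry). -/
theorem stmt_19 (H : Type) [NormedAddCommGroup H] [InnerProductSpace ℂ H] [CompleteSpace H]
    [Nontrivial H] :
    ∃ r : ℝ, 0 < r ∧ r < 1 ∧
      ∀ T : WithLp 1 (H × H) →L[ℂ] WithLp 1 (H × H),
        (∀ v : WithLp 1 (H × H), T v = WithLp.toLp 1 ((r : ℂ) • v.ofLp.1, 0)) →
        ∀ A : WithLp 1 (H × H) → ℝ,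
          (A = fun v => Real.sqrt (‖v‖ ^ 2 - ‖T v‖ ^ 2)) →
          ∀ e : H, ‖e‖ = 1 →
            ∀ e₁ e₂ : WithLp 1 (H × H), e₁ = WithLp.toLp 1 (e, 0) → e₂ = WithLp.toLp 1 (0, e) →
              A (e₁ + e₂) = Real.sqrt (4 - r ^ 2) ∧
              A e₁ + A e₂ = 1 + Real.sqrt (1 - r ^ 2) ∧
              1 + Real.sqrt (1 - r ^ 2) < Real.sqrt (4 - r ^ 2) ∧
              ¬ (∀ v w : WithLp 1 (H × H), A (v + w) ≤ A v + A w) := by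
  refine ⟨1/2, by norm_num, by norm_num, ?_⟩
  intro T hT A hA e he e₁ e₂ he₁ he₂
  have h12 : e₁ + e₂ = WithLp.toLp 1 ((e, e) : H × H) := by
    rw [he₁, he₂]; rw [← WithLp.toLp_add, Prod.mk_add_mk, add_zero, zero_add]
  have hne : ‖(e₁ + e₂ : WithLp 1 (H × H))‖ = 2 := by
    rw [norm1, h12]; simp [he]; norm_num
  have hTe : ∀ v : WithLp 1 (H × H), ‖T v‖ = (1/2 : ℝ) * ‖v.ofLp.1‖ := by
    intro v
    rw [hT v, norm1]
    simp [norm_smul]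
  have hn1 : ‖e₁‖ = 1 := by rw [norm1, he₁]; simp [he]
  have hn2 : ‖e₂‖ = 1 := by rw [norm1, he₂]; simp [he]
  have hf1 : ‖(e₁ : WithLp 1 (H × H)).ofLp.1‖ = 1 := by rw [he₁]; simpa using he
  have hf2 : ‖(e₂ : WithLp 1 (H × H)).ofLp.1‖ = 0 := by rw [he₂]; simp
  have hf12 : ‖(e₁ + e₂ : WithLp 1 (H × H)).ofLp.1‖ = 1 := by rw [h12]; simpa using he
  have eq1 : A (e₁ + e₂) = Real.sqrt (4 - (1/2:ℝ) ^ 2) := by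
    rw [hA]; simp only []
    rw [hTe, hne, hf12]; norm_num
  have eq2 : A e₁ + A e₂ = 1 + Real.sqrt (1 - (1/2:ℝ) ^ 2) := by
    rw [hA]; simp only []
    rw [hTe, hTe, hn1, hn2, hf1, hf2]
    have : Real.sqrt (1^2 - ((1:ℝ)/2 * 0)^2) = 1 := by norm_num
    rw [this]
    ring_nf
  have hlt : 1 + Real.sqrt (1 - (1/2:ℝ) ^ 2) < Real.sqrt (4 - (1/2:ℝ) ^ 2) := by
    have h1 : Real.sqrt (1 - (1/2:ℝ)^2) = Real.sqrt (3/4) := by norm_num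
    have h2 : Real.sqrt (4 - (1/2:ℝ)^2) = Real.sqrt (15/4) := by norm_num
    rw [h1, h2]
    have a2 : Real.sqrt (3/4) ^ 2 = 3/4 := Real.sq_sqrt (by norm_num)
    have b2 : Real.sqrt (15/4) ^ 2 = 15/4 := Real.sq_sqrt (by norm_num)
    have ha : (0:ℝ) ≤ Real.sqrt (3/4) := Real.sqrt_nonneg _
    have hb : (0:ℝ) ≤ Real.sqrt (15/4) := Real.sqrt_nonneg _
    nlinarith [sq_nonneg (Real.sqrt (3/4) - 1), sq_nonneg (Real.sqrt (15/4) - Real.sqrt (3/4))]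
  refine ⟨eq1, eq2, hlt, fun h => ?_⟩
  have := h e₁ e₂
  rw [eq1, eq2] at this
  exact absurd this (not_le.mpr hlt)
end
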